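/- arXiv:1702.00168 — 9 statements merged into one kernel-verified Lean document; each statement's English description precedes it below -/
import Mathlib

section
/- Let ℜ₀ be any finite family of polytopes in ℝ^N. Then a cycle is eventually formed: there exist n₀ ≥ 0 and k ≥ 1 such that ℜ_{n+k} = ℜ_n for all n ≥ n₀. -/
open scoped RealInnerProductSpace
open Set

noncomputable section

/-- The ambient Euclidean space `ℝ^N`. -/
abbrev Euc (N : ℕ) : Type := EuclideanSpace ℝ (Fin N)

/-- A polytope: a nonempty convex compact subset of `ℝ^N` with finitely many extreme points. -/
def IsPolytope {N : ℕ} (Ω : Set (Euc N)) : Prop :=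
  Ω.Nonempty ∧ Convex ℝ Ω ∧ IsCompact Ω ∧ (Set.extremePoints ℝ Ω).Finite

/-- The unit sphere `S` of `ℝ^N`. -/
def sph (N : ℕ) : Set (Euc N) := Metric.sphere (0 : Euc N) 1

/-- `E(Ω,d)`: the set of `d`-active extreme points of `Ω`. -/
def activeExt {N : ℕ} (Ω : Set (Euc N)) (d : Euc N) : Set (Euc N) :=
  {x ∈ Set.extremePoints ℝ Ω | ∀ y ∈ Ω, ⟪y, d⟫ ≤ ⟪x, d⟫}

/-- `Ω_ℜ(d) = conv (⋃_{Ω ∈ ℜ} E(Ω,d))`, the dual polytope of the family `ℜ` in direction `d`. -/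
def dualPoly {N : ℕ} (ℛ : Set (Set (Euc N))) (d : Euc N) : Set (Euc N) :=
  convexHull ℝ (⋃ Ω ∈ ℛ, activeExt Ω d)

/-- The dual family `F(ℜ) = {Ω_ℜ(d) : d ∈ S}`. -/
def dualFam {N : ℕ} (ℛ : Set (Set (Euc N))) : Set (Set (Euc N)) :=
  dualPoly ℛ '' sph N

/-- `E_ℜ`, the set of extreme points of all polytopes of the family `ℜ`. -/
def extFam {N : ℕ} (ℛ : Set (Set (Euc N))) : Set (Euc N) :=
  ⋃ Ω ∈ ℛ, Set.extremePoints ℝ Ω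

lemma extFam_dualFam_subset {N : ℕ} (ℛ : Set (Set (Euc N))) :
    extFam (dualFam ℛ) ⊆ extFam ℛ := by
  intro x hx
  simp only [extFam, mem_iUnion] at hx
  obtain ⟨Ω, hΩ, hxΩ⟩ := hx
  obtain ⟨d, -, rfl⟩ := hΩ
  have := extremePoints_convexHull_subset hxΩ
  simp only [mem_iUnion] at this
  obtain ⟨Ω', hΩ', hx'⟩ := this
  simp only [extFam, mem_iUnion]
  exact ⟨Ω', hΩ', hx'.1⟩

lemma dualFam_hulls {N : ℕ} (ℛ : Set (Set (Euc N))) {V : Set (Euc N)}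
    (h : extFam ℛ ⊆ V) :
    ∀ Ω ∈ dualFam ℛ, ∃ A ⊆ V, Ω = convexHull ℝ A := by
  rintro Ω ⟨d, -, rfl⟩
  refine ⟨⋃ Ω' ∈ ℛ, activeExt Ω' d, ?_, rfl⟩
  refine Set.Subset.trans ?_ h
  intro x hx
  simp only [mem_iUnion] at hx
  obtain ⟨Ω', hΩ', hx'⟩ := hx
  simp only [extFam, mem_iUnion]
  exact ⟨Ω', hΩ', hx'.1⟩

/-- a cycle is eventually formed. -/
theorem eventually_cycle {N : ℕ} (ℛ₀ : Set (Set (Euc N))) (hfin : ℛ₀.Finite)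
    (hpoly : ∀ Ω ∈ ℛ₀, IsPolytope Ω) :
    ∃ n₀ k : ℕ, 1 ≤ k ∧ ∀ n ≥ n₀, dualFam^[n + k] ℛ₀ = dualFam^[n] ℛ₀ := by
  set V : Set (Euc N) := extFam ℛ₀ with hV
  have hVfin : V.Finite := by
    apply Set.Finite.biUnion hfin
    intro Ω hΩ
    exact (hpoly Ω hΩ).2.2.2
  -- invariant: extFam (ℛ_n) ⊆ V for all n
  have hinv : ∀ n, extFam (dualFam^[n] ℛ₀) ⊆ V := by
    intro n
    induction n with
    | zero => simp [hV]
    | succ n ih =>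
      rw [Function.iterate_succ_apply']
      exact (extFam_dualFam_subset _).trans ih
  -- all ℛ_{n+1} lie in a fixed finite collection
  set 𝒮 : Set (Set (Set (Euc N))) := {ℛ | ℛ ⊆ convexHull ℝ '' {A | A ⊆ V}} with h𝒮
  have h𝒮fin : 𝒮.Finite :=
    Set.Finite.finite_subsets ((hVfin.finite_subsets).image _)
  have hmem : ∀ n, dualFam^[n + 1] ℛ₀ ∈ 𝒮 := by
    intro n
    rw [Function.iterate_succ_apply']
    intro Ω hΩ
    obtain ⟨A, hA, rfl⟩ := dualFam_hulls _ (hinv n) Ω hΩ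
    exact ⟨A, hA, rfl⟩
  obtain ⟨a, b, hab, heq⟩ :=
    Set.Finite.exists_lt_map_eq_of_forall_mem
      (f := fun n : ℕ => dualFam^[n + 1] ℛ₀) hmem h𝒮fin
  refine ⟨a + 1, b - a, by omega, ?_⟩
  intro n hn
  induction n, hn using Nat.le_induction with
  | base =>
    have : a + 1 + (b - a) = b + 1 := by omega
    rw [this]
    exact heq.symm
  | succ n hn ih =>
    have h1 : n + 1 + (b - a) = (n + (b - a)) + 1 := by omega
    rw [h1, Function.iterate_succ_apply', Function.iterate_succ_apply', ih]
end
end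

section
/- (The Demyanov–Ryabova conjecture holds in dimension 1.) Let ℜ₀ be a finite family of closed bounded intervals of ℝ (nonempty closed bounded intervals, i.e. polytopes in ℝ). Then ℜ₁ = ℜ₃, where ℜ₁ = F(ℜ₀), ℜ₂ = F(ℜ₁), ℜ₃ = F(ℜ₂). -/
open scoped RealInnerProductSpace
open Set

noncomputable section

namespace DR1

def ee : Euc 1 := WithLp.toLp 2 (fun _ => (1:ℝ))

lemma ext1 {x y : Euc 1} (h : x 0 = y 0) : x = y := by
  ext i; fin_cases i; exact h

lemma inner1 (x y : Euc 1) : ⟪x, y⟫ = x 0 * y 0 := by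
  simp [PiLp.inner_apply, Fin.sum_univ_one, RCLike.inner_apply]; ring

lemma ee_apply : ee 0 = 1 := rfl
lemma neg_ee_apply : (-ee) 0 = -1 := by simp [ee]

example (a b : ℝ) (q p : Euc 1) : (a • q + b • p) 0 = a * q 0 + b * p 0 := rfl

lemma sph1 : sph 1 = {ee, -ee} := by
  have hn : ∀ d : Euc 1, d 0 * d 0 = 1 → ‖d‖ = 1 := by
    intro d h
    have h2 : ‖d‖ ^ 2 = 1 := by
      rw [← real_inner_self_eq_norm_sq, inner1]; exact h
    nlinarith [norm_nonneg d]
  ext d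
  simp only [sph, Metric.mem_sphere, dist_zero_right, mem_insert_iff, mem_singleton_iff]
  constructor
  · intro h
    have h2 : d 0 * d 0 = 1 := by
      have := real_inner_self_eq_norm_sq d
      rw [inner1, h] at this; linarith
    rcases mul_self_eq_one_iff.1 h2 with h1 | h1
    · exact Or.inl (ext1 (by rw [h1, ee_apply]))
    · exact Or.inr (ext1 (by rw [h1, neg_ee_apply]))
  · rintro (rfl | rfl)
    · exact hn _ (by rw [ee_apply]; norm_num)
    · exact hn _ (by rw [neg_ee_apply]; norm_num)

lemma isLin0 : IsLinearMap ℝ (fun x : Euc 1 => x 0) := ⟨fun _ _ => rfl, fun _ _ => rfl⟩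

lemma seg_bound {q p y : Euc 1} (h : q 0 ≤ p 0) (hy : y ∈ segment ℝ q p) :
    q 0 ≤ y 0 ∧ y 0 ≤ p 0 := by
  obtain ⟨a, b, ha, hb, hab, rfl⟩ := hy
  have h0 : (a • q + b • p) 0 = a * q 0 + b * p 0 := rfl
  rw [h0]
  have e1 : a * q 0 + b * q 0 = q 0 := by rw [← add_mul, hab, one_mul]
  have e2 : a * p 0 + b * p 0 = p 0 := by rw [← add_mul, hab, one_mul]
  exact ⟨by linarith [mul_le_mul_of_nonneg_left h hb],
    by linarith [mul_le_mul_of_nonneg_left h ha]⟩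

lemma mem_segment_of {q p x : Euc 1} (h : q 0 ≤ p 0) (h1 : q 0 ≤ x 0) (h2 : x 0 ≤ p 0) :
    x ∈ segment ℝ q p := by
  rcases eq_or_lt_of_le h with heq | hlt
  · have : x = p := ext1 (le_antisymm h2 (heq ▸ h1))
    rw [this]; exact right_mem_segment ℝ q p
  · have hd : p 0 - q 0 ≠ 0 := by linarith
    refine ⟨(p 0 - x 0)/(p 0 - q 0), (x 0 - q 0)/(p 0 - q 0),
      div_nonneg (by linarith) (by linarith), div_nonneg (by linarith) (by linarith),
      ?_, ext1 ?_⟩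
    · rw [← add_div, show p 0 - x 0 + (x 0 - q 0) = p 0 - q 0 by ring, div_self hd]
    · have h0 : (((p 0 - x 0)/(p 0 - q 0)) • q + ((x 0 - q 0)/(p 0 - q 0)) • p) 0
          = (p 0 - x 0)/(p 0 - q 0) * q 0 + (x 0 - q 0)/(p 0 - q 0) * p 0 := rfl
      rw [h0]; field_simp; ring

lemma comb_eq_max {a c u v m : ℝ} (ha : 0 < a) (hc : 0 < c) (hac : a + c = 1)
    (e0 : a * u + c * v = m) (h1 : u ≤ m) (h2 : v ≤ m) : u = m ∧ v = m := by
  have h3 : a * m + c * m = m := by rw [← add_mul, hac, one_mul]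
  constructor
  · by_contra h
    have hlt : u < m := lt_of_le_of_ne h1 h
    have hm1 := mul_lt_mul_of_pos_left hlt ha
    have hm2 := mul_le_mul_of_nonneg_left h2 hc.le
    linarith
  · by_contra h
    have hlt : v < m := lt_of_le_of_ne h2 h
    have hm1 := mul_lt_mul_of_pos_left hlt hc
    have hm2 := mul_le_mul_of_nonneg_left h1 ha.le
    linarith

lemma comb_eq_min {a c u v m : ℝ} (ha : 0 < a) (hc : 0 < c) (hac : a + c = 1)
    (e0 : a * u + c * v = m) (h1 : m ≤ u) (h2 : m ≤ v) : u = m ∧ v = m := by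
  have h := comb_eq_max ha hc hac (show a * (-u) + c * (-v) = -m by
    rw [mul_neg, mul_neg, ← neg_add, e0]) (by linarith) (by linarith)
  exact ⟨by linarith [h.1], by linarith [h.2]⟩

lemma extreme_of_max {Ω : Set (Euc 1)} {b : Euc 1} (hb : b ∈ Ω)
    (hmax : ∀ y ∈ Ω, y 0 ≤ b 0) : b ∈ Set.extremePoints ℝ Ω := by
  refine mem_extremePoints.2 ⟨hb, fun x₁ h₁ x₂ h₂ hseg => ?_⟩
  obtain ⟨a, c, ha, hc, hac, hb'⟩ := hseg
  have e0 : a * x₁ 0 + c * x₂ 0 = b 0 := by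
    have : (a • x₁ + c • x₂) 0 = a * x₁ 0 + c * x₂ 0 := rfl
    rw [← this, hb']
  obtain ⟨e1, e2⟩ := comb_eq_max ha hc hac e0 (hmax x₁ h₁) (hmax x₂ h₂)
  exact ⟨ext1 e1, ext1 e2⟩

lemma extreme_of_min {Ω : Set (Euc 1)} {b : Euc 1} (hb : b ∈ Ω)
    (hmin : ∀ y ∈ Ω, b 0 ≤ y 0) : b ∈ Set.extremePoints ℝ Ω := by
  refine mem_extremePoints.2 ⟨hb, fun x₁ h₁ x₂ h₂ hseg => ?_⟩
  obtain ⟨a, c, ha, hc, hac, hb'⟩ := hseg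
  have e0 : a * x₁ 0 + c * x₂ 0 = b 0 := by
    have : (a • x₁ + c • x₂) 0 = a * x₁ 0 + c * x₂ 0 := rfl
    rw [← this, hb']
  obtain ⟨e1, e2⟩ := comb_eq_min ha hc hac e0 (hmin x₁ h₁) (hmin x₂ h₂)
  exact ⟨ext1 e1, ext1 e2⟩

lemma mem_activeExt_pos {Ω : Set (Euc 1)} {x : Euc 1} :
    x ∈ activeExt Ω ee ↔ x ∈ Ω ∧ ∀ y ∈ Ω, y 0 ≤ x 0 := by
  constructor
  · rintro ⟨hx, hxm⟩
    refine ⟨hx.1, fun y hy => ?_⟩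
    have := hxm y hy
    rw [inner1, inner1, ee_apply, mul_one, mul_one] at this
    exact this
  · rintro ⟨hx, hmax⟩
    exact ⟨extreme_of_max hx hmax, fun y hy => by
      rw [inner1, inner1, ee_apply, mul_one, mul_one]; exact hmax y hy⟩

lemma mem_activeExt_neg {Ω : Set (Euc 1)} {x : Euc 1} :
    x ∈ activeExt Ω (-ee) ↔ x ∈ Ω ∧ ∀ y ∈ Ω, x 0 ≤ y 0 := by
  constructor
  · rintro ⟨hx, hxm⟩
    refine ⟨hx.1, fun y hy => ?_⟩
    have := hxm y hy
    rw [inner1, inner1, neg_ee_apply] at this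
    linarith
  · rintro ⟨hx, hmin⟩
    exact ⟨extreme_of_min hx hmin, fun y hy => by
      rw [inner1, inner1, neg_ee_apply]
      have := hmin y hy; nlinarith⟩

lemma activeExt_seg_pos {q p : Euc 1} (h : q 0 ≤ p 0) :
    activeExt (segment ℝ q p) ee = {p} := by
  ext x
  rw [mem_activeExt_pos, mem_singleton_iff]
  constructor
  · rintro ⟨hx, hmax⟩
    exact ext1 (le_antisymm ((seg_bound h hx).2) (hmax p (right_mem_segment ℝ q p)))
  · rintro rfl
    exact ⟨right_mem_segment ℝ _ _, fun y hy => (seg_bound h hy).2⟩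

lemma activeExt_seg_neg {q p : Euc 1} (h : q 0 ≤ p 0) :
    activeExt (segment ℝ q p) (-ee) = {q} := by
  ext x
  rw [mem_activeExt_neg, mem_singleton_iff]
  constructor
  · rintro ⟨hx, hmin⟩
    exact ext1 (le_antisymm (hmin q (left_mem_segment ℝ q p)) ((seg_bound h hx).1))
  · rintro rfl
    exact ⟨left_mem_segment ℝ _ _, fun y hy => (seg_bound h hy).1⟩

lemma dualFam_pair (ℛ : Set (Set (Euc 1))) :
    dualFam ℛ = {dualPoly ℛ ee, dualPoly ℛ (-ee)} := by
  rw [dualFam, sph1, image_pair]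

lemma biUnion_pair' {X Y : Set (Euc 1)} (f : Set (Euc 1) → Set (Euc 1)) :
    (⋃ Ω ∈ ({X, Y} : Set (Set (Euc 1))), f Ω) = f X ∪ f Y := by
  simp [Set.biUnion_insert]

lemma key {q p o r : Euc 1} (hqp : q 0 ≤ p 0) (hor : o 0 ≤ r 0) :
    dualFam {segment ℝ q p, segment ℝ o r} = {segment ℝ p r, segment ℝ q o} := by
  rw [dualFam_pair]
  have h1 : dualPoly {segment ℝ q p, segment ℝ o r} ee = segment ℝ p r := by
    rw [dualPoly, biUnion_pair', activeExt_seg_pos hqp, activeExt_seg_pos hor]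
    rw [Set.singleton_union, convexHull_pair]
  have h2 : dualPoly {segment ℝ q p, segment ℝ o r} (-ee) = segment ℝ q o := by
    rw [dualPoly, biUnion_pair', activeExt_seg_neg hqp, activeExt_seg_neg hor]
    rw [Set.singleton_union, convexHull_pair]
  rw [h1, h2]

end DR1

open DR1

/-- the Demyanov–Ryabova conjecture in dimension 1: for a finite family of
closed bounded intervals of `ℝ` (i.e. polytopes in `ℝ`), `ℜ₁ = ℜ₃`. -/
theorem demyanov_ryabova_dim_one (ℛ₀ : Set (Set (Euc 1))) (hfin : ℛ₀.Finite)
    (hpoly : ∀ Ω ∈ ℛ₀, IsPolytope Ω) :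
    dualFam^[1] ℛ₀ = dualFam^[3] ℛ₀ := by
  have hit : dualFam^[1] ℛ₀ = dualFam ℛ₀ := rfl
  have hit3 : dualFam^[3] ℛ₀ = dualFam (dualFam (dualFam ℛ₀)) := rfl
  rw [hit, hit3]
  rcases Set.eq_empty_or_nonempty ℛ₀ with rfl | hne
  · have h0 : ∀ d, dualPoly (∅ : Set (Set (Euc 1))) d = ∅ := fun d => by
      simp [dualPoly]
    have he : dualFam (∅ : Set (Set (Euc 1))) = {∅} := by
      rw [dualFam_pair, h0, h0]; simp
    have h1 : ∀ d, dualPoly ({∅} : Set (Set (Euc 1))) d = ∅ := fun d => by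
      simp [dualPoly, activeExt]
    have he1 : dualFam ({∅} : Set (Set (Euc 1))) = {∅} := by
      rw [dualFam_pair, h1, h1]; simp
    rw [he, he1, he1]
  · -- nonempty case
    -- the sets of top / bottom points
    set Tp : Set (Euc 1) := {x | ∃ Ω ∈ ℛ₀, x ∈ Ω ∧ ∀ y ∈ Ω, y 0 ≤ x 0} with hTp
    set Tm : Set (Euc 1) := {x | ∃ Ω ∈ ℛ₀, x ∈ Ω ∧ ∀ y ∈ Ω, x 0 ≤ y 0} with hTm
    have hUp : (⋃ Ω ∈ ℛ₀, activeExt Ω ee) = Tp := by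
      ext x
      constructor
      · intro hx
        obtain ⟨Ω, hΩ, hxa⟩ := mem_iUnion₂.1 hx
        obtain ⟨h1, h2⟩ := mem_activeExt_pos.1 hxa
        exact ⟨Ω, hΩ, h1, h2⟩
      · rintro ⟨Ω, hΩ, h1, h2⟩
        exact mem_iUnion₂.2 ⟨Ω, hΩ, mem_activeExt_pos.2 ⟨h1, h2⟩⟩
    have hUm : (⋃ Ω ∈ ℛ₀, activeExt Ω (-ee)) = Tm := by
      ext x
      constructor
      · intro hx
        obtain ⟨Ω, hΩ, hxa⟩ := mem_iUnion₂.1 hx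
        obtain ⟨h1, h2⟩ := mem_activeExt_neg.1 hxa
        exact ⟨Ω, hΩ, h1, h2⟩
      · rintro ⟨Ω, hΩ, h1, h2⟩
        exact mem_iUnion₂.2 ⟨Ω, hΩ, mem_activeExt_neg.2 ⟨h1, h2⟩⟩
    -- existence of max / min in each Ω
    have htop : ∀ Ω ∈ ℛ₀, ∃ b ∈ Ω, ∀ y ∈ Ω, y 0 ≤ b 0 := by
      intro Ω hΩ
      obtain ⟨hne', hconv, hcomp, _⟩ := hpoly Ω hΩ
      obtain ⟨b, hb, hmax⟩ := hcomp.exists_isMaxOn hne' ((continuous_apply 0).comp (PiLp.continuous_ofLp 2 (fun _ : Fin 1 => ℝ))).continuousOn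
      exact ⟨b, hb, fun y hy => hmax hy⟩
    have hbot : ∀ Ω ∈ ℛ₀, ∃ b ∈ Ω, ∀ y ∈ Ω, b 0 ≤ y 0 := by
      intro Ω hΩ
      obtain ⟨hne', hconv, hcomp, _⟩ := hpoly Ω hΩ
      obtain ⟨b, hb, hmin⟩ := hcomp.exists_isMinOn hne' ((continuous_apply 0).comp (PiLp.continuous_ofLp 2 (fun _ : Fin 1 => ℝ))).continuousOn
      exact ⟨b, hb, fun y hy => hmin hy⟩
    -- finiteness of Tp, Tm
    have hTpfin : Tp.Finite := by
      have : Tp ⊆ ⋃ Ω ∈ ℛ₀, {x | x ∈ Ω ∧ ∀ y ∈ Ω, y 0 ≤ x 0} := by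
        rintro x ⟨Ω, hΩ, hx⟩; exact mem_iUnion₂.2 ⟨Ω, hΩ, hx⟩
      refine Set.Finite.subset (Set.Finite.biUnion hfin fun Ω hΩ => ?_) this
      apply Set.Subsingleton.finite
      rintro a ⟨ha, hamax⟩ b ⟨hb, hbmax⟩
      exact ext1 (le_antisymm (hbmax a ha) (hamax b hb))
    have hTmfin : Tm.Finite := by
      have : Tm ⊆ ⋃ Ω ∈ ℛ₀, {x | x ∈ Ω ∧ ∀ y ∈ Ω, x 0 ≤ y 0} := by
        rintro x ⟨Ω, hΩ, hx⟩; exact mem_iUnion₂.2 ⟨Ω, hΩ, hx⟩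
      refine Set.Finite.subset (Set.Finite.biUnion hfin fun Ω hΩ => ?_) this
      apply Set.Subsingleton.finite
      rintro a ⟨ha, hamin⟩ b ⟨hb, hbmin⟩
      exact ext1 (le_antisymm (hamin b hb) (hbmin a ha))
    -- nonemptiness
    obtain ⟨Ω₀, hΩ₀⟩ := hne
    have hTpne : Tp.Nonempty := by
      obtain ⟨b, hb, hm⟩ := htop Ω₀ hΩ₀; exact ⟨b, Ω₀, hΩ₀, hb, hm⟩
    have hTmne : Tm.Nonempty := by
      obtain ⟨b, hb, hm⟩ := hbot Ω₀ hΩ₀; exact ⟨b, Ω₀, hΩ₀, hb, hm⟩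
    -- A and B
    set A : Set (Euc 1) := convexHull ℝ Tp with hA
    set B : Set (Euc 1) := convexHull ℝ Tm with hB
    have hAcomp : IsCompact A := hTpfin.isCompact_convexHull ℝ
    have hBcomp : IsCompact B := hTmfin.isCompact_convexHull ℝ
    have hAne : A.Nonempty := hTpne.mono (subset_convexHull ℝ Tp)
    have hBne : B.Nonempty := hTmne.mono (subset_convexHull ℝ Tm)
    obtain ⟨P, hPA, hPmax⟩ := hAcomp.exists_isMaxOn hAne ((continuous_apply 0).comp (PiLp.continuous_ofLp 2 (fun _ : Fin 1 => ℝ))).continuousOn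
    obtain ⟨Q, hQA, hQmin⟩ := hAcomp.exists_isMinOn hAne ((continuous_apply 0).comp (PiLp.continuous_ofLp 2 (fun _ : Fin 1 => ℝ))).continuousOn
    obtain ⟨R, hRB, hRmax⟩ := hBcomp.exists_isMaxOn hBne ((continuous_apply 0).comp (PiLp.continuous_ofLp 2 (fun _ : Fin 1 => ℝ))).continuousOn
    obtain ⟨O, hOB, hOmin⟩ := hBcomp.exists_isMinOn hBne ((continuous_apply 0).comp (PiLp.continuous_ofLp 2 (fun _ : Fin 1 => ℝ))).continuousOn
    have hQP : Q 0 ≤ P 0 := hPmax hQA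
    have hOR : O 0 ≤ R 0 := hRmax hOB
    -- A, B are segments
    have hAseg : A = segment ℝ Q P := by
      apply Subset.antisymm
      · intro x hx
        exact mem_segment_of hQP (hQmin hx) (hPmax hx)
      · exact (convex_convexHull ℝ Tp).segment_subset hQA hPA
    have hBseg : B = segment ℝ O R := by
      apply Subset.antisymm
      · intro x hx
        exact mem_segment_of hOR (hOmin hx) (hRmax hx)
      · exact (convex_convexHull ℝ Tm).segment_subset hOB hRB
    -- cross bounds
    have hRP : R 0 ≤ P 0 := by
      have hsub : B ⊆ {y : Euc 1 | y 0 ≤ P 0} := by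
        rw [hB]
        apply convexHull_min _ (convex_halfSpace_le isLin0 (P 0))
        rintro x ⟨Ω, hΩ, hxΩ, hxmin⟩
        obtain ⟨b, hb, hbmax⟩ := htop Ω hΩ
        have hbTp : b ∈ Tp := ⟨Ω, hΩ, hb, hbmax⟩
        have hbA : b ∈ A := subset_convexHull ℝ Tp hbTp
        calc x 0 ≤ b 0 := hbmax x hxΩ
          _ ≤ P 0 := hPmax hbA
      exact hsub hRB
    have hOQ : O 0 ≤ Q 0 := by
      have hsub : A ⊆ {y : Euc 1 | O 0 ≤ y 0} := by
        rw [hA]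
        apply convexHull_min _ (convex_halfSpace_ge isLin0 (O 0))
        rintro x ⟨Ω, hΩ, hxΩ, hxmax⟩
        obtain ⟨b, hb, hbmin⟩ := hbot Ω hΩ
        have hbTm : b ∈ Tm := ⟨Ω, hΩ, hb, hbmin⟩
        have hbB : b ∈ B := subset_convexHull ℝ Tm hbTm
        calc O 0 ≤ b 0 := hOmin hbB
          _ ≤ x 0 := hbmin x hxΩ
      exact hsub hQA
    -- ℛ₁ computation
    have hR1 : dualFam ℛ₀ = {segment ℝ Q P, segment ℝ O R} := by
      rw [dualFam_pair]
      have h1 : dualPoly ℛ₀ ee = A := by rw [dualPoly, hUp]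
      have h2 : dualPoly ℛ₀ (-ee) = B := by rw [dualPoly, hUm]
      rw [h1, h2, hAseg, hBseg]
    rw [hR1, key hQP hOR]
    have hsymm : ({segment ℝ P R, segment ℝ Q O} : Set (Set (Euc 1)))
        = {segment ℝ R P, segment ℝ O Q} := by
      rw [segment_symm ℝ P R, segment_symm ℝ Q O]
    rw [hsymm, key hRP hOQ, segment_symm ℝ P Q, segment_symm ℝ R O]
end
end

section
/- Let E ⊆ ℝ^N be a finite set satisfying (H1) and set C = conv(E). Then for every x̄ ∈ E the normal cone N_C(x̄) has nonempty interior, and every direction d ∈ S ∩ int N_C(x̄) strictly exposes x̄ in C: ⟨y,d⟩ < ⟨x̄,d⟩ for every y ∈ E with y ≠ x̄ (equivalently, any d-compatible enumeration of E strictly locates x̄ at the R-position). -/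
open scoped RealInnerProductSpace
open Set

noncomputable section

/-- The normal cone `N_C(x) = {d : ⟨d, y - x⟩ ≤ 0 for all y ∈ C}`. -/
def normalCone {N : ℕ} (C : Set (Euc N)) (x : Euc N) : Set (Euc N) :=
  {d : Euc N | ∀ y ∈ C, ⟪d, y - x⟫ ≤ 0}

/-- under (H1), for every `xbar ∈ E` the normal cone `N_C(xbar)` has nonempty
interior, and every `d ∈ S ∩ int N_C(xbar)` strictly exposes `xbar` in `C`. -/
theorem normal_cone_interior_strictly_exposes {N : ℕ} (E : Set (Euc N)) (hEfin : E.Finite)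
    (H1 : ∀ x ∈ E, x ∉ convexHull ℝ (E \ {x}))
    (C : Set (Euc N)) (hC : C = convexHull ℝ E)
    (xbar : Euc N) (hxbar : xbar ∈ E) :
    (interior (normalCone C xbar)).Nonempty ∧
      ∀ d ∈ sph N ∩ interior (normalCone C xbar),
        ∀ y ∈ E, y ≠ xbar → ⟪y, d⟫ < ⟪xbar, d⟫ := by
  subst hC
  -- membership in the normal cone is implied by the inequalities on `E`
  have hcone : ∀ d : Euc N, (∀ y ∈ E, ⟪d, y - xbar⟫ ≤ 0) →
      d ∈ normalCone (convexHull ℝ E) xbar := by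
    intro d hd y hy
    have hconv : Convex ℝ {y : Euc N | ⟪d, y⟫ ≤ ⟪d, xbar⟫} := by
      have hlin : IsLinearMap ℝ (fun y : Euc N => ⟪d, y⟫) :=
        ⟨fun a b => inner_add_right d a b, fun c a => real_inner_smul_right d a c⟩
      exact convex_halfSpace_le hlin _
    have hsub : convexHull ℝ E ⊆ {y : Euc N | ⟪d, y⟫ ≤ ⟪d, xbar⟫} := by
      apply convexHull_min _ hconv
      intro z hz
      simpa [inner_sub_right, sub_nonpos] using hd z hz
    simpa [inner_sub_right, sub_nonpos] using hsub hy
  constructor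
  · -- interior nonempty
    have hfin : (E \ {xbar}).Finite := hEfin.diff
    -- strict separation of xbar from conv (E \ {xbar})
    obtain ⟨d, hd⟩ : ∃ d : Euc N, ∀ y ∈ E \ {xbar}, ⟪d, y - xbar⟫ < 0 := by
      have hclosed : IsClosed (convexHull ℝ (E \ {xbar})) :=
        (hfin.isCompact_convexHull (𝕜 := ℝ)).isClosed
      obtain ⟨f, u, hf1, hf2⟩ := geometric_hahn_banach_closed_point
        (convex_convexHull ℝ (E \ {xbar})) hclosed (H1 xbar hxbar)
      refine ⟨(InnerProductSpace.toDual ℝ (Euc N)).symm f, fun y hy => ?_⟩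
      have hyhull : y ∈ convexHull ℝ (E \ {xbar}) := subset_convexHull ℝ _ hy
      have h1 : f y < f xbar := (hf1 y hyhull).trans hf2
      have h2 : ∀ z : Euc N, ⟪(InnerProductSpace.toDual ℝ (Euc N)).symm f, z⟫ = f z :=
        fun z => InnerProductSpace.toDual_symm_apply
      rw [inner_sub_right, h2, h2]
      linarith
    set U : Set (Euc N) := ⋂ y ∈ E \ {xbar}, {d : Euc N | ⟪d, y - xbar⟫ < 0} with hU
    have hUopen : IsOpen U := by
      apply hfin.isOpen_biInter
      intro y _
      have hcont : Continuous fun d : Euc N => ⟪d, y - xbar⟫ :=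
        continuous_id.inner continuous_const
      exact isOpen_lt hcont continuous_const
    have hdU : d ∈ U := by
      rw [hU]
      exact Set.mem_biInter fun y hy => hd y hy
    have hUsub : U ⊆ normalCone (convexHull ℝ E) xbar := by
      intro e he
      apply hcone
      intro y hy
      by_cases hye : y = xbar
      · simp [hye]
      · exact le_of_lt (Set.mem_iInter₂.mp he y ⟨hy, hye⟩)
    exact ⟨d, interior_maximal hUsub hUopen hdU⟩
  · -- strict exposure
    rintro d ⟨-, hdint⟩ y hy hne
    obtain ⟨ε, hεpos, hball⟩ := Metric.mem_nhds_iff.mp (mem_interior_iff_mem_nhds.mp hdint)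
    set v : Euc N := y - xbar with hv
    have hvne : v ≠ 0 := sub_ne_zero.mpr hne
    have hvnorm : (0:ℝ) < ‖v‖ := norm_pos_iff.mpr hvne
    set c : ℝ := ε / (2 * ‖v‖) with hc
    have hcpos : 0 < c := div_pos hεpos (by positivity)
    have hmem : d + c • v ∈ Metric.ball d ε := by
      rw [Metric.mem_ball, dist_eq_norm, show d + c • v - d = c • v by abel, norm_smul,
        Real.norm_eq_abs, abs_of_pos hcpos, hc, div_mul_eq_mul_div, div_lt_iff₀ (by positivity)]
      nlinarith
    have hnc : d + c • v ∈ normalCone (convexHull ℝ E) xbar := hball hmem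
    have hyhull : y ∈ convexHull ℝ E := subset_convexHull ℝ _ hy
    have hle : ⟪d + c • v, y - xbar⟫ ≤ 0 := hnc y hyhull
    rw [← hv, inner_add_left, real_inner_smul_left, real_inner_self_eq_norm_sq] at hle
    have hsq : 0 < c * ‖v‖ ^ 2 := by positivity
    have hdv : ⟪d, v⟫ < 0 := by linarith
    have : ⟪d, y⟫ - ⟪d, xbar⟫ < 0 := by
      rw [← inner_sub_right]; exact hdv
    have h1 : ⟪d, y⟫ < ⟪d, xbar⟫ := by linarith
    linarith [real_inner_comm y d, real_inner_comm xbar d]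
end
end

section
/- (Uniform control lemma.) Let E ⊆ ℝ^N be a finite set satisfying (H1), C = conv(E), and fix a selection x ∈ E ↦ e_x ∈ S ∩ int N_C(x). Then there exist constants M > 0 and m > 0 such that for every d ∈ S and every x ∈ E, the map D_x(t) = d + t·e_x satisfies: (ii) for all t > 0 large enough, ⟨x, D_x(t)⟩ > ⟨y, D_x(t)⟩ for all y ∈ E with y ≠ x, and for all t < 0 with |t| large enough, ⟨x, D_x(t)⟩ < ⟨y, D_x(t)⟩ for all y ∈ E with y ≠ x; (iii) |⟨y₁ − y₂, D_x(t) − d⟩| ≤ M|t| for all y₁, y₂ ∈ E and t ∈ ℝ; (iv) |⟨x − y, D_x(t) − d⟩| ≥ m|t| for all y ∈ E with y ≠ x and all t ∈ ℝ. -/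
open scoped RealInnerProductSpace
open Set

noncomputable section

lemma key_pos {N : ℕ} (C : Set (Euc N)) (x y u : Euc N) (hyC : y ∈ C) (hxy : y ≠ x)
    (hu : u ∈ interior (normalCone C x)) : 0 < ⟪x - y, u⟫ := by
  obtain ⟨ε, hε, hball⟩ := Metric.mem_nhds_iff.mp (mem_interior_iff_mem_nhds.mp hu)
  set v := y - x with hv
  have hv0 : v ≠ 0 := sub_ne_zero.mpr hxy
  have hnv : 0 < ‖v‖ := norm_pos_iff.mpr hv0
  set c := ε / (2 * ‖v‖) with hc
  have hc0 : 0 < c := by positivity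
  have hmem : u + c • v ∈ Metric.ball u ε := by
    rw [Metric.mem_ball, dist_eq_norm]
    have h1 : u + c • v - u = c • v := by abel
    rw [h1, norm_smul, Real.norm_of_nonneg hc0.le]
    have h2 : c * ‖v‖ = ε / 2 := by
      rw [hc]; field_simp
    rw [h2]; linarith
  have hN : ⟪u + c • v, y - x⟫ ≤ 0 := hball hmem y hyC
  rw [inner_add_left, real_inner_smul_left, ← hv] at hN
  have hvv : ⟪v, v⟫ = ‖v‖ ^ 2 := real_inner_self_eq_norm_sq v
  have hgoal : ⟪x - y, u⟫ = -⟪u, v⟫ := by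
    rw [show x - y = -v by rw [hv]; abel, inner_neg_left, real_inner_comm]
  rw [hgoal]
  nlinarith [sq_nonneg ‖v‖, mul_pos hc0 (mul_pos hnv hnv)]

set_option maxHeartbeats 1000000 in
/-- Uniform control lemma. -/
theorem uniform_control {N : ℕ} (E : Set (Euc N)) (hEfin : E.Finite)
    (H1 : ∀ x ∈ E, x ∉ convexHull ℝ (E \ {x}))
    (C : Set (Euc N)) (hC : C = convexHull ℝ E)
    (e : Euc N → Euc N) (he : ∀ x ∈ E, e x ∈ sph N ∩ interior (normalCone C x)) :
    ∃ M > (0 : ℝ), ∃ m > (0 : ℝ), ∀ d ∈ sph N, ∀ x ∈ E,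
      ((∃ T > (0 : ℝ), ∀ t ≥ T, ∀ y ∈ E, y ≠ x →
          ⟪y, d + t • e x⟫ < ⟪x, d + t • e x⟫) ∧
        (∃ T < (0 : ℝ), ∀ t ≤ T, ∀ y ∈ E, y ≠ x →
          ⟪x, d + t • e x⟫ < ⟪y, d + t • e x⟫)) ∧
      (∀ y₁ ∈ E, ∀ y₂ ∈ E, ∀ t : ℝ,
        |⟪y₁ - y₂, (d + t • e x) - d⟫| ≤ M * |t|) ∧
      (∀ y ∈ E, y ≠ x → ∀ t : ℝ,
        m * |t| ≤ |⟪x - y, (d + t • e x) - d⟫|) := by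
  classical
  -- norm of e x is 1
  have hnorme : ∀ x ∈ E, ‖e x‖ = 1 := by
    intro x hx
    have := (he x hx).1
    simpa [sph, mem_sphere_zero_iff_norm] using this
  -- key positivity
  have hkey : ∀ x ∈ E, ∀ y ∈ E, y ≠ x → 0 < ⟪x - y, e x⟫ := by
    intro x hx y hy hyx
    have hyC : y ∈ C := by
      rw [hC]; exact subset_convexHull ℝ E hy
    exact key_pos C x y (e x) hyC hyx (he x hx).2
  -- the simplification of the increment
  have hsimp : ∀ (x d : Euc N) (t : ℝ) (z : Euc N),
      ⟪z, (d + t • e x) - d⟫ = t * ⟪z, e x⟫ := by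
    intro x d t z
    have : (d + t • e x) - d = t • e x := by abel
    rw [this, real_inner_smul_right]
  by_cases hP : ∃ x ∈ E, ∃ y ∈ E, y ≠ x
  · obtain ⟨x₀, hx₀, y₀, hy₀, hne⟩ := hP
    set P : Set (Euc N × Euc N) := (E ×ˢ E) ∩ {p | p.1 ≠ p.2} with hPdef
    have hPfin : P.Finite := (hEfin.prod hEfin).inter_of_left _
    have hPne : P.Nonempty := ⟨(y₀, x₀), ⟨⟨hy₀, hx₀⟩, hne⟩⟩
    obtain ⟨p₀, hp₀, hmin⟩ :=
      Set.exists_min_image P (fun p => ⟪p.1 - p.2, e p.1⟫) hPfin hPne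
    set m := ⟪p₀.1 - p₀.2, e p₀.1⟫ with hmdef
    have hm : 0 < m :=
      hkey p₀.1 hp₀.1.1 p₀.2 hp₀.1.2 (Ne.symm hp₀.2)
    have hm_le : ∀ x ∈ E, ∀ y ∈ E, y ≠ x → m ≤ ⟪x - y, e x⟫ := by
      intro x hx y hy hyx
      exact hmin (x, y) ⟨⟨hx, hy⟩, Ne.symm hyx⟩
    have h2fin : ((E ×ˢ E) : Set (Euc N × Euc N)).Finite := hEfin.prod hEfin
    have h2ne : ((E ×ˢ E) : Set (Euc N × Euc N)).Nonempty := ⟨(x₀, x₀), ⟨hx₀, hx₀⟩⟩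
    obtain ⟨q₀, hq₀, hmax⟩ :=
      Set.exists_max_image (E ×ˢ E) (fun p => ‖p.1 - p.2‖) h2fin h2ne
    set M := ‖q₀.1 - q₀.2‖ + 1 with hMdef
    have hMn : ∀ y₁ ∈ E, ∀ y₂ ∈ E, ‖y₁ - y₂‖ ≤ M - 1 := by
      intro y₁ hy₁ y₂ hy₂
      have := hmax (y₁, y₂) ⟨hy₁, hy₂⟩
      simp only [hMdef]
      linarith [this]
    have hM : 0 < M := by
      have h0 : (0:ℝ) ≤ ‖q₀.1 - q₀.2‖ := norm_nonneg _
      linarith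
    refine ⟨M, hM, m, hm, ?_⟩
    intro d hd x hx
    have hdn : ‖d‖ = 1 := by simpa [sph, mem_sphere_zero_iff_norm] using hd
    refine ⟨⟨⟨M / m, div_pos hM hm, ?_⟩, ⟨-(M / m), neg_lt_zero.mpr (div_pos hM hm), ?_⟩⟩, ?_, ?_⟩
    · -- t large positive
      intro t ht y hy hyx
      have h2 : m ≤ ⟪x - y, e x⟫ := hm_le x hx y hy hyx
      have h1 : ⟪y - x, d⟫ ≤ M - 1 := by
        calc ⟪y - x, d⟫ ≤ ‖y - x‖ * ‖d‖ := real_inner_le_norm _ _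
          _ = ‖y - x‖ := by rw [hdn, mul_one]
          _ ≤ M - 1 := hMn y hy x hx
      have ht0 : 0 ≤ t := le_trans (div_pos hM hm).le ht
      have htm : M ≤ t * m := by
        have := mul_le_mul_of_nonneg_right ht hm.le
        rwa [div_mul_cancel₀ _ hm.ne'] at this
      have htΔ : t * m ≤ t * ⟪x - y, e x⟫ := mul_le_mul_of_nonneg_left h2 ht0
      rw [inner_add_right, inner_add_right, real_inner_smul_right, real_inner_smul_right]
      have e1 : ⟪y - x, d⟫ = ⟪y, d⟫ - ⟪x, d⟫ := inner_sub_left _ _ _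
      rw [e1] at h1
      have e2 : ⟪x - y, e x⟫ = ⟪x, e x⟫ - ⟪y, e x⟫ := inner_sub_left _ _ _
      rw [e2] at htΔ
      nlinarith
    · -- t large negative
      intro t ht y hy hyx
      have h2 : m ≤ ⟪x - y, e x⟫ := hm_le x hx y hy hyx
      have h1 : ⟪x - y, d⟫ ≤ M - 1 := by
        calc ⟪x - y, d⟫ ≤ ‖x - y‖ * ‖d‖ := real_inner_le_norm _ _
          _ = ‖x - y‖ := by rw [hdn, mul_one]
          _ ≤ M - 1 := hMn x hx y hy
      have ht0 : t ≤ 0 := le_trans ht (neg_nonpos.mpr (div_pos hM hm).le)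
      have htm : t * m ≤ -M := by
        have := mul_le_mul_of_nonneg_right ht hm.le
        rwa [neg_mul, div_mul_cancel₀ _ hm.ne'] at this
      have htΔ : t * ⟪x - y, e x⟫ ≤ t * m := mul_le_mul_of_nonpos_left h2 ht0
      rw [inner_add_right, inner_add_right, real_inner_smul_right, real_inner_smul_right]
      have e1 : ⟪x - y, d⟫ = ⟪x, d⟫ - ⟪y, d⟫ := inner_sub_left _ _ _
      rw [e1] at h1
      have e2 : ⟪x - y, e x⟫ = ⟪x, e x⟫ - ⟪y, e x⟫ := inner_sub_left _ _ _
      rw [e2] at htΔ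
      nlinarith
    · -- (iii)
      intro y₁ hy₁ y₂ hy₂ t
      rw [hsimp, abs_mul]
      have hb : |⟪y₁ - y₂, e x⟫| ≤ M := by
        calc |⟪y₁ - y₂, e x⟫| ≤ ‖y₁ - y₂‖ * ‖e x‖ := abs_real_inner_le_norm _ _
          _ = ‖y₁ - y₂‖ := by rw [hnorme x hx, mul_one]
          _ ≤ M := by linarith [hMn y₁ hy₁ y₂ hy₂]
      calc |t| * |⟪y₁ - y₂, e x⟫| ≤ |t| * M :=
            mul_le_mul_of_nonneg_left hb (abs_nonneg t)
        _ = M * |t| := mul_comm _ _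
    · -- (iv)
      intro y hy hyx t
      rw [hsimp, abs_mul]
      have h2 : m ≤ ⟪x - y, e x⟫ := hm_le x hx y hy hyx
      have : m ≤ |⟪x - y, e x⟫| := le_trans h2 (le_abs_self _)
      calc m * |t| = |t| * m := mul_comm _ _
        _ ≤ |t| * |⟪x - y, e x⟫| := mul_le_mul_of_nonneg_left this (abs_nonneg t)
  · -- degenerate case: all points of E are equal
    push_neg at hP
    refine ⟨1, one_pos, 1, one_pos, ?_⟩
    intro d hd x hx
    refine ⟨⟨⟨1, one_pos, ?_⟩, ⟨-1, by norm_num, ?_⟩⟩, ?_, ?_⟩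
    · intro t ht y hy hyx; exact absurd (hP x hx y hy) hyx
    · intro t ht y hy hyx; exact absurd (hP x hx y hy) hyx
    · intro y₁ hy₁ y₂ hy₂ t
      have h12 : y₁ = y₂ := hP y₂ hy₂ y₁ hy₁
      rw [h12]
      have hz : ⟪y₂ - y₂, (d + t • e x) - d⟫ = (0:ℝ) := by
        rw [sub_self]; exact inner_zero_left _
      rw [hz, abs_zero]
      positivity
    · intro y hy hyx t; exact absurd (hP x hx y hy) hyx
end
end

section
/- (Strict location in the very next position.) Let E ⊆ ℝ^N (N ≥ 2) be a finite set of R points satisfying (H1). Let {x_j}_{j=1}^R be a d-compatible enumeration of E for some d ∈ S, and suppose for some 1 ≤ i ≤ R−1 that ⟨x_{i−1},d⟩ < ⟨x_i,d⟩ ≤ ⟨x_{i+1},d⟩ (the left inequality vacuous if i = 1). Then there exist a direction d′ ∈ S and a d′-compatible enumeration {y_j}_{j=1}^R of E such that {x_1,…,x_{i−1}} ⊆ {y_1,…,y_i}, y_{i+1} = x_i, and ⟨y_i,d′⟩ < ⟨y_{i+1},d′⟩ < ⟨y_{i+2},d′⟩ (i.e. d′ strictly locates x_i at the (i+1)-position).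 -/
open scoped RealInnerProductSpace
open Set

noncomputable section

/-- A `d`-compatible enumeration of a finite set `E` of cardinality `R`:
an enumeration `x 0, x 1, …, x (R-1)` of `E` with `⟪x 0, d⟫ ≤ ⟪x 1, d⟫ ≤ ⋯ ≤ ⟪x (R-1), d⟫`. -/
def IsCompatEnum {N : ℕ} (E : Set (Euc N)) (R : ℕ) (d : Euc N) (x : ℕ → Euc N) : Prop :=
  Set.InjOn x (Set.Iio R) ∧ x '' (Set.Iio R) = E ∧
    ∀ i j : ℕ, i ≤ j → j < R → ⟪x i, d⟫ ≤ ⟪x j, d⟫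

/-! ### Auxiliary lemmas -/

lemma aux_div_cancel (X L : ℝ) (hL : L ≠ 0) : (-X) / (2*L) * L = (-X)/2 := by
  field_simp

lemma aux_ncard_Iio (n : ℕ) : (Set.Iio n).ncard = n := by
  rw [← Nat.card_coe_set_eq, Nat.card_eq_card_toFinset]
  simp

lemma aux_generic_exists {N : ℕ} (s : Set (Euc N)) (hs : IsOpen s) (hsn : s.Nonempty)
    (V : Set (Euc N)) (hV : V.Finite) (hV0 : ∀ u ∈ V, u ≠ 0) :
    ∃ ℓ ∈ s, ∀ u ∈ V, ⟪u, ℓ⟫ ≠ 0 := by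
  have hZ : MeasureTheory.volume (⋃ u ∈ V, {ℓ : Euc N | ⟪u, ℓ⟫ = 0}) = 0 := by
    apply MeasureTheory.measure_biUnion_null_iff hV.countable |>.mpr
    intro u hu
    have : {ℓ : Euc N | ⟪u, ℓ⟫ = 0} = (LinearMap.ker ((innerSL ℝ u : Euc N →L[ℝ] ℝ) : Euc N →ₗ[ℝ] ℝ) : Submodule ℝ (Euc N)) := by
      ext ℓ; simp [LinearMap.mem_ker]
    rw [this]
    apply MeasureTheory.Measure.addHaar_submodule
    intro h
    have hu' : u ∈ LinearMap.ker ((innerSL ℝ u : Euc N →L[ℝ] ℝ) : Euc N →ₗ[ℝ] ℝ) := h.symm ▸ Submodule.mem_top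
    have : ⟪u, u⟫ = (0:ℝ) := by simpa [LinearMap.mem_ker] using hu'
    exact hV0 u hu (inner_self_eq_zero.mp this)
  have hpos := hs.measure_pos MeasureTheory.volume hsn
  have : ¬ (s ⊆ ⋃ u ∈ V, {ℓ : Euc N | ⟪u, ℓ⟫ = 0}) := by
    intro h
    exact absurd (le_antisymm ((MeasureTheory.measure_mono h).trans hZ.le) zero_le) hpos.ne'
  obtain ⟨ℓ, hℓs, hℓZ⟩ := not_subset.mp this
  exact ⟨ℓ, hℓs, fun u hu => by simpa using fun h => hℓZ (Set.mem_biUnion hu h)⟩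

lemma aux_sep_cone {N : ℕ} (E : Set (Euc N)) (hE : E.Finite) (v : Euc N)
    (hv : v ∉ convexHull ℝ (E \ {v})) :
    IsOpen {ℓ : Euc N | ∀ w ∈ E \ {v}, 0 < ⟪w - v, ℓ⟫} ∧
      {ℓ : Euc N | ∀ w ∈ E \ {v}, 0 < ⟪w - v, ℓ⟫}.Nonempty := by
  constructor
  · have : {ℓ : Euc N | ∀ w ∈ E \ {v}, 0 < ⟪w - v, ℓ⟫}
        = ⋂ w ∈ E \ {v}, {ℓ : Euc N | 0 < ⟪w - v, ℓ⟫} := by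
      ext ℓ; simp
    rw [this]
    exact Set.Finite.isOpen_biInter hE.diff fun w _ =>
      isOpen_lt continuous_const (innerSL ℝ (w - v)).continuous
  · obtain ⟨f, u, hfv, hfb⟩ := geometric_hahn_banach_point_closed
      (convex_convexHull ℝ (E \ {v}))
      (((hE.diff : (E \ {v}).Finite).isCompact_convexHull ℝ).isClosed) hv
    refine ⟨(InnerProductSpace.toDual ℝ (Euc N)).symm f, fun w hw => ?_⟩
    have h1 : f w > u := hfb w (subset_convexHull ℝ _ hw)
    have h2 : ⟪(InnerProductSpace.toDual ℝ (Euc N)).symm f, w - v⟫ = f (w - v) := by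
      simp [InnerProductSpace.toDual_symm_apply]
    rw [real_inner_comm, h2, map_sub]
    linarith

lemma aux_sorted_enum {N : ℕ} (F : Set (Euc N)) (hF : F.Finite) (d : Euc N) :
    ∃ y : ℕ → Euc N, IsCompatEnum F F.ncard d y := by
  classical
  set le : Euc N → Euc N → Bool := fun a b => decide (⟪a, d⟫ ≤ ⟪b, d⟫) with hle
  set l : List (Euc N) := hF.toFinset.toList.mergeSort le with hl
  have hperm : l.Perm hF.toFinset.toList := List.mergeSort_perm _ _
  have hnodup : l.Nodup := hperm.nodup_iff.mpr (Finset.nodup_toList _)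
  have hlen : l.length = F.ncard := by
    rw [hperm.length_eq, Finset.length_toList, Set.ncard_eq_toFinset_card F hF]
  have hmem : ∀ a, a ∈ l ↔ a ∈ F := by
    intro a
    rw [hperm.mem_iff, Finset.mem_toList]
    simp
  have hsorted : l.Pairwise (fun a b => le a b = true) :=
    List.pairwise_mergeSort
      (by intro a b c hab hbc; simp only [hle, decide_eq_true_eq] at *; linarith)
      (by intro a b; simp only [hle, Bool.or_eq_true, decide_eq_true_eq]; exact le_total _ _) _
  refine ⟨fun j => l.getD j 0, ?_, ?_, ?_⟩
  · intro j hj k hk hjk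
    simp only [Set.mem_Iio] at hj hk
    change l.getD j 0 = l.getD k 0 at hjk
    rw [← hlen] at hj hk
    rw [List.getD_eq_getElem l 0 hj, List.getD_eq_getElem l 0 hk] at hjk
    exact (List.Nodup.getElem_inj_iff hnodup).mp hjk
  · ext a
    simp only [Set.mem_image, Set.mem_Iio]
    constructor
    · rintro ⟨j, hj, rfl⟩
      rw [← hlen] at hj
      rw [List.getD_eq_getElem l 0 hj]
      exact (hmem _).mp (List.getElem_mem _)
    · intro ha
      obtain ⟨j, hj, hja⟩ := List.getElem_of_mem ((hmem a).mpr ha)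
      exact ⟨j, hlen ▸ hj, by rw [List.getD_eq_getElem l 0 hj]; exact hja⟩
  · intro j k hjk hk
    rcases eq_or_lt_of_le hjk with rfl | hjk'
    · exact le_refl _
    · have hk' : k < l.length := hlen ▸ hk
      have hj' : j < l.length := lt_trans hjk' hk'
      have hmono : ⟪l.getD j 0, d⟫ ≤ ⟪l.getD k 0, d⟫ := by
        rw [List.getD_eq_getElem l 0 hj', List.getD_eq_getElem l 0 hk']
        have := List.pairwise_iff_getElem.mp hsorted j k hj' hk' hjk'
        simpa [hle, decide_eq_true_eq] using this
      exact hmono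

lemma aux_downward_closed_eq_Iio (T : Set ℕ) (hT : T.Finite)
    (hdc : ∀ k j, k ≤ j → j ∈ T → k ∈ T) : T = Set.Iio T.ncard := by
  apply Set.Subset.antisymm
  · intro j hj
    by_contra hjn
    simp only [Set.mem_Iio, not_lt] at hjn
    have hsub : Set.Iic j ⊆ T := fun k hk => hdc k j hk hj
    have h1 := Set.ncard_le_ncard hsub hT
    have h2 : (Set.Iic j).ncard = j + 1 := by
      rw [← Nat.card_coe_set_eq, Nat.card_eq_card_toFinset]; simp
    omega
  · intro k hk
    simp only [Set.mem_Iio] at hk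
    by_contra hkT
    have hsub : T ⊆ Set.Iio k := by
      intro j hj
      simp only [Set.mem_Iio]
      by_contra hjk
      push_neg at hjk
      exact hkT (hdc k j hjk hj)
    have h1 := Set.ncard_le_ncard hsub (Set.finite_Iio k)
    have h2 := aux_ncard_Iio k
    omega

/-- If `w' - v = lam • (w - v)` with `0 < lam < 1` and `v, w ∈ E \ {w'}`,
then `w'` lies in the convex hull of `E \ {w'}`. -/
lemma aux_segment_mem {N : ℕ} (E : Set (Euc N)) (v w w' : Euc N)
    (hvE : v ∈ E) (hwE : w ∈ E) (hvne : v ≠ w') (hwne : w ≠ w')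
    (lam : ℝ) (h0 : 0 < lam) (h1 : lam < 1)
    (heq : w' - v = lam • (w - v)) :
    w' ∈ convexHull ℝ (E \ {w'}) := by
  have hseg : w' ∈ segment ℝ v w := by
    refine ⟨1 - lam, lam, by linarith, h0.le, by ring, ?_⟩
    have h : (1 - lam) • v + lam • w = v + lam • (w - v) := by module
    rw [h, ← heq]; abel
  have hsub : ({v, w} : Set (Euc N)) ⊆ E \ {w'} := by
    rintro u (rfl | rfl)
    · exact ⟨hvE, by simpa using hvne⟩
    · exact ⟨hwE, by simpa using hwne⟩
  have hpair : w' ∈ convexHull ℝ ({v, w} : Set (Euc N)) := by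
    rw [convexHull_pair]; exact hseg
  exact convexHull_mono hsub hpair

/-- The pair vectors appearing in the genericity argument are nonzero. -/
lemma aux_pair_ne_zero {N : ℕ} (E : Set (Euc N)) 
    (H1 : ∀ x ∈ E, x ∉ convexHull ℝ (E \ {x}))
    (v : Euc N) (hvE : v ∈ E) (w w' : Euc N)
    (hwE : w ∈ E) (hw'E : w' ∈ E) (hwv : w ≠ v) (hw'v : w' ≠ v) (hne : w ≠ w')
    (α β : ℝ) (hα : 0 < α) (hβ : 0 < β) :
    α • (w' - v) - β • (w - v) ≠ 0 := by
  intro h0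
  have heq : α • (w' - v) = β • (w - v) := sub_eq_zero.mp h0
  have heq2 : w' - v = (β / α) • (w - v) := by
    have h := congrArg (fun u => α⁻¹ • u) heq
    simpa [smul_smul, inv_mul_cancel₀ hα.ne', div_eq_inv_mul] using h
  set lam := β / α with hlam
  have hlampos : 0 < lam := div_pos hβ hα
  rcases lt_trichotomy lam 1 with hlt | heq1 | hgt
  · exact H1 w' hw'E (aux_segment_mem E v w w' hvE hwE (Ne.symm hw'v) hne lam hlampos hlt heq2)
  · rw [heq1, one_smul] at heq2
    exact hne (by have := sub_left_inj.mp heq2; exact this.symm)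
  · have heq3 : w - v = lam⁻¹ • (w' - v) := by
      rw [heq2, smul_smul, inv_mul_cancel₀ hlampos.ne', one_smul]
    have hinv0 : 0 < lam⁻¹ := inv_pos.mpr hlampos
    have hinv1 : lam⁻¹ < 1 := inv_lt_one_of_one_lt₀ hgt
    exact H1 w hwE (aux_segment_mem E v w' w hvE hw'E (Ne.symm hwv) (Ne.symm hne) lam⁻¹ hinv0 hinv1 heq3)

/-- Core separation lemma: there is a direction `g` putting `A` and exactly one point `z` of `B`
strictly below `v`, and all other points of `B` strictly above `v`. -/
lemma aux_core {N : ℕ} (E : Set (Euc N)) (hE : E.Finite)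
    (H1 : ∀ x ∈ E, x ∉ convexHull ℝ (E \ {x}))
    (v : Euc N) (hvE : v ∈ E)
    (A : Set (Euc N)) (hA : A ⊆ E \ {v})
    (B : Set (Euc N)) (hB : B = E \ insert v A) (hBne : B.Nonempty)
    (d : Euc N) (hAd : ∀ a ∈ A, ⟪a - v, d⟫ < 0) (hBd : ∀ w ∈ B, 0 ≤ ⟪w - v, d⟫) :
    ∃ g : Euc N, g ≠ 0 ∧ ∃ z ∈ B,
      (∀ a ∈ A, ⟪a - v, g⟫ < 0) ∧ ⟪z - v, g⟫ < 0 ∧ (∀ w ∈ B, w ≠ z → 0 < ⟪w - v, g⟫) := by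
  classical
  have hv : v ∉ convexHull ℝ (E \ {v}) := H1 v hvE
  obtain ⟨hCopen, hCne⟩ := aux_sep_cone E hE v hv
  set C := {ℓ : Euc N | ∀ w ∈ E \ {v}, 0 < ⟪w - v, ℓ⟫} with hC
  obtain ⟨ℓ₁, hℓ₁⟩ := hCne
  have hAfin : A.Finite := hE.subset (hA.trans diff_subset)
  have hBfin : B.Finite := hE.subset (hB ▸ diff_subset)
  have hBE : ∀ w ∈ B, w ∈ E \ {v} := by
    rw [hB]; intro w hw
    exact ⟨hw.1, fun h => hw.2 (mem_singleton_iff.mp h ▸ mem_insert _ _)⟩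
  have hAE : ∀ a ∈ A, a ∈ E \ {v} := fun a ha => hA ha
  -- choose ε > 0 keeping A strictly below under d₁ = d + ε • ℓ₁
  have hεex : ∃ ε : ℝ, 0 < ε ∧ ∀ a ∈ A, ⟪a - v, d⟫ + ε * ⟪a - v, ℓ₁⟫ < 0 := by
    rcases A.eq_empty_or_nonempty with rfl | hAne
    · exact ⟨1, one_pos, fun a ha => absurd ha (notMem_empty a)⟩
    · obtain ⟨a₀, ha₀, hmin⟩ := Set.exists_min_image A
        (fun a => (-⟪a - v, d⟫) / (2 * ⟪a - v, ℓ₁⟫)) hAfin hAne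
      refine ⟨(-⟪a₀ - v, d⟫) / (2 * ⟪a₀ - v, ℓ₁⟫), ?_, ?_⟩
      · have h2 : 0 < ⟪a₀ - v, ℓ₁⟫ := hℓ₁ (a₀) (hAE a₀ ha₀)
        have h3 : 0 < -⟪a₀ - v, d⟫ := by linarith [hAd a₀ ha₀]
        exact div_pos h3 (by linarith)
      · intro a ha
        have h1 : 0 < ⟪a - v, ℓ₁⟫ := hℓ₁ a (hAE a ha)
        have h4 := hmin a ha
        have h5 := mul_le_mul_of_nonneg_right h4 h1.le
        rw [aux_div_cancel _ _ h1.ne'] at h5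
        have h7 : 0 < -⟪a - v, d⟫ := by linarith [hAd a ha]
        linarith
  obtain ⟨ε, hε, hεA⟩ := hεex
  set d₁ := d + ε • ℓ₁ with hd₁
  have hd₁A : ∀ a ∈ A, ⟪a - v, d₁⟫ < 0 := by
    intro a ha
    rw [hd₁, inner_add_right, real_inner_smul_right]
    exact hεA a ha
  have hd₁B : ∀ w ∈ B, 0 < ⟪w - v, d₁⟫ := by
    intro w hw
    rw [hd₁, inner_add_right, real_inner_smul_right]
    have h1 := hBd w hw
    have h2 := hℓ₁ w (hBE w hw)
    nlinarith
  -- genericity: choose ℓ' in the cone avoiding the pair hyperplanes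
  set V : Set (Euc N) :=
    (fun p : Euc N × Euc N => ⟪p.1 - v, d₁⟫ • (p.2 - v) - ⟪p.2 - v, d₁⟫ • (p.1 - v)) ''
      {p : Euc N × Euc N | p.1 ∈ B ∧ p.2 ∈ B ∧ p.1 ≠ p.2} with hV
  have hVfin : V.Finite :=
    Set.Finite.image _ ((hBfin.prod hBfin).subset fun p hp => ⟨hp.1, hp.2.1⟩)
  have hV0 : ∀ u ∈ V, u ≠ 0 := by
    rintro u ⟨⟨w, w'⟩, ⟨hw, hw', hne⟩, rfl⟩
    exact aux_pair_ne_zero E H1 v hvE w w' (hBE w hw).1 (hBE w' hw').1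
      (by simpa using (hBE w hw).2) (by simpa using (hBE w' hw').2) hne
      _ _ (hd₁B w hw) (hd₁B w' hw')
  obtain ⟨ℓ', hℓ'C, hℓ'V⟩ := aux_generic_exists C hCopen ⟨ℓ₁, hℓ₁⟩ V hVfin hV0
  have hℓ'pos : ∀ w ∈ B, 0 < ⟪w - v, ℓ'⟫ := fun w hw => hℓ'C (w) (hBE w hw)
  -- crossing times
  set t : Euc N → ℝ := fun w => ⟪w - v, d₁⟫ / ⟪w - v, ℓ'⟫ with ht
  have htpos : ∀ w ∈ B, 0 < t w := fun w hw => div_pos (hd₁B w hw) (hℓ'pos w hw)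
  have htinj : ∀ w ∈ B, ∀ w' ∈ B, w ≠ w' → t w ≠ t w' := by
    intro w hw w' hw' hne hteq
    have hcross : ⟪w - v, d₁⟫ * ⟪w' - v, ℓ'⟫ = ⟪w' - v, d₁⟫ * ⟪w - v, ℓ'⟫ :=
      (div_eq_div_iff (hℓ'pos w hw).ne' (hℓ'pos w' hw').ne').mp hteq
    have hVmem : ⟪w - v, d₁⟫ • (w' - v) - ⟪w' - v, d₁⟫ • (w - v) ∈ V :=
      ⟨(w, w'), ⟨hw, hw', hne⟩, rfl⟩
    have := hℓ'V _ hVmem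
    apply this
    rw [inner_sub_left, real_inner_smul_left, real_inner_smul_left]
    linarith
  obtain ⟨w₀, hw₀B, hw₀min⟩ := Set.exists_min_image B t hBfin hBne
  -- choose the sweep parameter τ
  have hτex : ∃ τ : ℝ, t w₀ < τ ∧ ∀ w ∈ B, w ≠ w₀ → τ < t w := by
    rcases (B \ {w₀}).eq_empty_or_nonempty with hemp | hne
    · refine ⟨t w₀ + 1, by linarith, fun w hw hwne => ?_⟩
      exact absurd (show w ∈ B \ {w₀} from ⟨hw, by simpa using hwne⟩) (hemp ▸ notMem_empty w)
    · obtain ⟨w₁, hw₁, hw₁min⟩ := Set.exists_min_image (B \ {w₀}) t hBfin.diff hne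
      have hw₁B : w₁ ∈ B := hw₁.1
      have hw₁ne : w₁ ≠ w₀ := by simpa using hw₁.2
      have hlt : t w₀ < t w₁ :=
        lt_of_le_of_ne (hw₀min w₁ hw₁B) (htinj w₀ hw₀B w₁ hw₁B (Ne.symm hw₁ne))
      refine ⟨(t w₀ + t w₁) / 2, by linarith, fun w hw hwne => ?_⟩
      have := hw₁min w ⟨hw, by simpa using hwne⟩
      linarith
  obtain ⟨τ, hτ₀, hτ₁⟩ := hτex
  have hτpos : 0 < τ := lt_trans (htpos w₀ hw₀B) hτ₀
  refine ⟨d₁ - τ • ℓ', ?_, w₀, hw₀B, ?_, ?_, ?_⟩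
  · intro h0
    have := hd₁B w₀ hw₀B
    have hkey : ⟪w₀ - v, d₁ - τ • ℓ'⟫ = 0 := by rw [h0, inner_zero_right]
    rw [inner_sub_right, real_inner_smul_right] at hkey
    have hBpos := hℓ'pos w₀ hw₀B
    have hA₀ : ⟪w₀ - v, d₁⟫ = t w₀ * ⟪w₀ - v, ℓ'⟫ := by
      simp only [ht]
      rw [div_mul_cancel₀ _ hBpos.ne']
    rw [hA₀] at hkey
    nlinarith [hτ₀]
  · intro a ha
    rw [inner_sub_right, real_inner_smul_right]
    have h1 := hd₁A a ha
    have h2 := hℓ'C a (hAE a ha)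
    nlinarith
  · rw [inner_sub_right, real_inner_smul_right]
    have hBpos := hℓ'pos w₀ hw₀B
    have hA₀ : ⟪w₀ - v, d₁⟫ = t w₀ * ⟪w₀ - v, ℓ'⟫ := by
      simp only [ht]
      rw [div_mul_cancel₀ _ hBpos.ne']
    rw [hA₀]
    nlinarith [hτ₀]
  · intro w hw hwne
    rw [inner_sub_right, real_inner_smul_right]
    have hBpos := hℓ'pos w hw
    have hA₀ : ⟪w - v, d₁⟫ = t w * ⟪w - v, ℓ'⟫ := by
      simp only [ht]
      rw [div_mul_cancel₀ _ hBpos.ne']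
    rw [hA₀]
    have := hτ₁ w hw hwne
    nlinarith

/-- Strict location in the very next position. Indices are 0-based:
position `i` here corresponds to position `i+1` of the paper. -/
theorem strict_location_next_position {N : ℕ} (hN : 2 ≤ N)
    (E : Set (Euc N)) (hEfin : E.Finite) (R : ℕ) (hR : R = E.ncard)
    (H1 : ∀ x ∈ E, x ∉ convexHull ℝ (E \ {x}))
    (d : Euc N) (hd : d ∈ sph N) (x : ℕ → Euc N) (hx : IsCompatEnum E R d x)
    (i : ℕ) (hi : i + 1 < R)
    (hleft : ∀ j < i, ⟪x j, d⟫ < ⟪x i, d⟫) :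
    ∃ d' ∈ sph N, ∃ y : ℕ → Euc N, IsCompatEnum E R d' y ∧
      x '' (Set.Iio i) ⊆ y '' (Set.Iic i) ∧
      y (i + 1) = x i ∧
      (∀ j ≤ i, ⟪y j, d'⟫ < ⟪y (i + 1), d'⟫) ∧
      (∀ j : ℕ, i + 1 < j → j < R → ⟪y (i + 1), d'⟫ < ⟪y j, d'⟫) := by
  classical
  obtain ⟨hinj, himg, hmono⟩ := hx
  have hiR : i < R := by omega
  have hvE : x i ∈ E := himg ▸ ⟨i, Set.mem_Iio.mpr hiR, rfl⟩
  -- the lower set A and the upper set B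
  have hAsub : x '' (Set.Iio i) ⊆ E \ {x i} := by
    rintro a ⟨j, hj, rfl⟩
    simp only [Set.mem_Iio] at hj
    refine ⟨himg ▸ ⟨j, Set.mem_Iio.mpr (by omega), rfl⟩, ?_⟩
    simp only [Set.mem_singleton_iff]
    intro h
    have hlj := hleft j hj
    rw [h] at hlj
    exact lt_irrefl _ hlj
  have hBne : (E \ insert (x i) (x '' (Set.Iio i))).Nonempty := by
    refine ⟨x (i+1), himg ▸ ⟨i+1, Set.mem_Iio.mpr hi, rfl⟩, ?_⟩
    intro hmem
    rcases Set.mem_insert_iff.mp hmem with h | ⟨j, hj, hji⟩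
    · have := hinj (Set.mem_Iio.mpr hi) (Set.mem_Iio.mpr hiR) h
      omega
    · simp only [Set.mem_Iio] at hj
      have := hinj (Set.mem_Iio.mpr (by omega : j < R)) (Set.mem_Iio.mpr hi) hji
      omega
  have hAd : ∀ a ∈ x '' (Set.Iio i), ⟪a - x i, d⟫ < 0 := by
    rintro a ⟨j, hj, rfl⟩
    simp only [Set.mem_Iio] at hj
    rw [inner_sub_left]
    linarith [hleft j hj]
  have hBd : ∀ w ∈ E \ insert (x i) (x '' (Set.Iio i)), 0 ≤ ⟪w - x i, d⟫ := by
    rintro w ⟨hwE, hwni⟩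
    have : w ∈ x '' (Set.Iio R) := himg.symm ▸ hwE
    obtain ⟨j, hj, rfl⟩ := this
    simp only [Set.mem_Iio] at hj
    have hij : i ≤ j := by
      by_contra hlt
      push_neg at hlt
      rcases Nat.lt_or_ge j i with h' | h'
      · exact hwni (Set.mem_insert_of_mem _ ⟨j, Set.mem_Iio.mpr h', rfl⟩)
      · omega
    rw [inner_sub_left]
    linarith [hmono i j hij hj]
  obtain ⟨g, hg0, z, hzB, hAg, hzg, hBg⟩ :=
    aux_core E hEfin H1 (x i) hvE (x '' (Set.Iio i)) hAsub
      (E \ insert (x i) (x '' (Set.Iio i))) rfl hBne d hAd hBd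
  -- the new direction
  set d' := ‖g‖⁻¹ • g with hd'
  have hgnorm : ‖g‖ ≠ 0 := norm_ne_zero_iff.mpr hg0
  have hd'sph : d' ∈ sph N := by
    rw [sph, mem_sphere_zero_iff_norm, hd', norm_smul, norm_inv, norm_norm,
      inv_mul_cancel₀ hgnorm]
  have hpos : 0 < ‖g‖⁻¹ := inv_pos.mpr (norm_pos_iff.mpr hg0)
  have key : ∀ u : Euc N, ⟪u, d'⟫ - ⟪x i, d'⟫ = ‖g‖⁻¹ * ⟪u - x i, g⟫ := by
    intro u
    rw [← inner_sub_left, hd', real_inner_smul_right]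
  -- strict positions under d'
  have hLlt : ∀ u ∈ insert z (x '' (Set.Iio i)), ⟪u, d'⟫ < ⟪x i, d'⟫ := by
    intro u hu
    have hneg : ⟪u - x i, g⟫ < 0 := by
      rcases Set.mem_insert_iff.mp hu with rfl | hu'
      · exact hzg
      · exact hAg u hu'
    nlinarith [key u]
  have hUgt : ∀ w ∈ E \ insert (x i) (x '' (Set.Iio i)), w ≠ z → ⟪x i, d'⟫ < ⟪w, d'⟫ := by
    intro w hw hwz
    have hposw : 0 < ⟪w - x i, g⟫ := hBg w hw hwz
    nlinarith [key w]
  have hzE : z ∈ E := hzB.1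
  have hzni : z ∉ insert (x i) (x '' (Set.Iio i)) := hzB.2
  have hzA : z ∉ x '' (Set.Iio i) := fun h => hzni (Set.mem_insert_of_mem _ h)
  have hzv : z ≠ x i := fun h => hzni (h ▸ Set.mem_insert _ _)
  -- decomposition of E
  have hdecomp : ∀ u ∈ E, u = x i ∨ u ∈ insert z (x '' (Set.Iio i)) ∨
      (u ∈ E \ insert (x i) (x '' (Set.Iio i)) ∧ u ≠ z) := by
    intro u huE
    by_cases h1 : u = x i
    · exact Or.inl h1
    · by_cases h2 : u = z
      · exact Or.inr (Or.inl (h2 ▸ Set.mem_insert _ _))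
      · by_cases h3 : u ∈ x '' (Set.Iio i)
        · exact Or.inr (Or.inl (Set.mem_insert_of_mem _ h3))
        · refine Or.inr (Or.inr ⟨⟨huE, ?_⟩, h2⟩)
          intro hmem
          rcases Set.mem_insert_iff.mp hmem with h | h
          · exact h1 h
          · exact h3 h
  have hval_lt : ∀ u ∈ E, (⟪u, d'⟫ < ⟪x i, d'⟫ ↔ u ∈ insert z (x '' (Set.Iio i))) := by
    intro u huE
    constructor
    · intro hlt'
      rcases hdecomp u huE with rfl | h | ⟨hB', hne'⟩
      · exact absurd hlt' (lt_irrefl _)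
      · exact h
      · exact absurd hlt' (not_lt.mpr (hUgt u hB' hne').le)
    · exact hLlt u
  have hval_le : ∀ u ∈ E, (⟪u, d'⟫ ≤ ⟪x i, d'⟫ ↔
      u ∈ insert (x i) (insert z (x '' (Set.Iio i)))) := by
    intro u huE
    constructor
    · intro hle'
      rcases hdecomp u huE with rfl | h | ⟨hB', hne'⟩
      · exact Set.mem_insert _ _
      · exact Set.mem_insert_of_mem _ h
      · exact absurd hle' (not_le.mpr (hUgt u hB' hne'))
    · intro hu
      rcases Set.mem_insert_iff.mp hu with rfl | h
      · exact le_refl _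
      · exact (hLlt u h).le
  -- cardinalities
  have hAfin : (x '' (Set.Iio i)).Finite := hEfin.subset (hAsub.trans Set.diff_subset)
  have hAcard : (x '' (Set.Iio i)).ncard = i := by
    rw [Set.ncard_image_of_injOn (hinj.mono (fun j hj => Set.mem_Iio.mpr
      (lt_trans (Set.mem_Iio.mp hj) hiR)))]
    exact aux_ncard_Iio i
  have hLfin : (insert z (x '' (Set.Iio i))).Finite := hAfin.insert z
  have hLcard : (insert z (x '' (Set.Iio i))).ncard = i + 1 := by
    rw [Set.ncard_insert_of_notMem hzA hAfin, hAcard]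
  have hvL : x i ∉ insert z (x '' (Set.Iio i)) := by
    intro hmem
    rcases Set.mem_insert_iff.mp hmem with h | h
    · exact hzv h.symm
    · exact (hAsub h).2 rfl
  have hL'card : (insert (x i) (insert z (x '' (Set.Iio i)))).ncard = i + 2 := by
    rw [Set.ncard_insert_of_notMem hvL hLfin, hLcard]
  have hLsubE : insert z (x '' (Set.Iio i)) ⊆ E := by
    intro u hu
    rcases Set.mem_insert_iff.mp hu with rfl | h
    · exact hzE
    · exact (hAsub h).1
  -- the sorted enumeration under d'
  obtain ⟨y, hy⟩ := aux_sorted_enum E hEfin d'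
  have hyR : IsCompatEnum E R d' y := hR ▸ hy
  obtain ⟨hyinj, hyimg, hymono⟩ := hyR
  -- the lower index set
  set T : Set ℕ := {j : ℕ | j < R ∧ ⟪y j, d'⟫ < ⟪x i, d'⟫} with hT
  have hTsub : T ⊆ Set.Iio R := fun j hj => Set.mem_Iio.mpr hj.1
  have hTfin : T.Finite := (Set.finite_Iio R).subset hTsub
  have hTdc : ∀ k j, k ≤ j → j ∈ T → k ∈ T := by
    intro k j hkj hj
    obtain ⟨hjR, hjv⟩ := hj
    exact ⟨by omega, lt_of_le_of_lt (hymono k j hkj hjR) hjv⟩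
  have hyE : ∀ j, j < R → y j ∈ E := fun j hj => hyimg ▸ ⟨j, Set.mem_Iio.mpr hj, rfl⟩
  have hTimg : y '' T = insert z (x '' (Set.Iio i)) := by
    apply Set.Subset.antisymm
    · rintro _ ⟨j, hj, rfl⟩
      exact (hval_lt (y j) (hyE j hj.1)).mp hj.2
    · intro u hu
      have huE : u ∈ E := hLsubE hu
      have : u ∈ y '' (Set.Iio R) := hyimg.symm ▸ huE
      obtain ⟨j, hj, rfl⟩ := this
      exact ⟨j, ⟨Set.mem_Iio.mp hj, hLlt _ hu⟩, rfl⟩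
  have hTcard : T.ncard = i + 1 := by
    rw [← Set.ncard_image_of_injOn (hyinj.mono hTsub), hTimg, hLcard]
  have hTIio : T = Set.Iio (i+1) := by
    have h := aux_downward_closed_eq_Iio T hTfin hTdc
    rw [hTcard] at h
    exact h
  -- the lower-or-equal index set
  set T' : Set ℕ := {j : ℕ | j < R ∧ ⟪y j, d'⟫ ≤ ⟪x i, d'⟫} with hT'
  have hT'sub : T' ⊆ Set.Iio R := fun j hj => Set.mem_Iio.mpr hj.1
  have hT'fin : T'.Finite := (Set.finite_Iio R).subset hT'sub
  have hT'dc : ∀ k j, k ≤ j → j ∈ T' → k ∈ T' := by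
    intro k j hkj hj
    obtain ⟨hjR, hjv⟩ := hj
    exact ⟨by omega, le_trans (hymono k j hkj hjR) hjv⟩
  have hT'img : y '' T' = insert (x i) (insert z (x '' (Set.Iio i))) := by
    apply Set.Subset.antisymm
    · rintro _ ⟨j, hj, rfl⟩
      exact (hval_le (y j) (hyE j hj.1)).mp hj.2
    · intro u hu
      have huE : u ∈ E := by
        rcases Set.mem_insert_iff.mp hu with rfl | h
        · exact hvE
        · exact hLsubE h
      have : u ∈ y '' (Set.Iio R) := hyimg.symm ▸ huE
      obtain ⟨j, hj, rfl⟩ := this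
      exact ⟨j, ⟨Set.mem_Iio.mp hj, (hval_le _ huE).mpr hu⟩, rfl⟩
  have hT'card : T'.ncard = i + 2 := by
    rw [← Set.ncard_image_of_injOn (hyinj.mono hT'sub), hT'img, hL'card]
  have hT'Iio : T' = Set.Iio (i+2) := by
    have h := aux_downward_closed_eq_Iio T' hT'fin hT'dc
    rw [hT'card] at h
    exact h
  -- y (i+1) = x i
  have hi1T' : (i+1) ∈ T' := by rw [hT'Iio]; exact Set.mem_Iio.mpr (by omega)
  have hi1T : (i+1) ∉ T := by rw [hTIio]; simp
  have hyi1 : y (i+1) = x i := by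
    have hle' : ⟪y (i+1), d'⟫ ≤ ⟪x i, d'⟫ := hi1T'.2
    have hmem := (hval_le _ (hyE (i+1) hi)).mp hle'
    rcases Set.mem_insert_iff.mp hmem with h | h
    · exact h
    · exact absurd ⟨hi, hLlt _ h⟩ hi1T
  -- conclusion
  refine ⟨d', hd'sph, y, ⟨hyinj, hyimg, hymono⟩, ?_, hyi1, ?_, ?_⟩
  · rintro a ⟨j, hj, rfl⟩
    have haL : x j ∈ insert z (x '' (Set.Iio i)) := Set.mem_insert_of_mem _ ⟨j, hj, rfl⟩
    have : x j ∈ y '' T := hTimg.symm ▸ haL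
    obtain ⟨k, hk, hkj⟩ := this
    rw [hTIio] at hk
    have hk' := Set.mem_Iio.mp hk
    exact ⟨k, Set.mem_Iic.mpr (by omega), hkj⟩
  · intro j hj
    rw [hyi1]
    have hjT : j ∈ T := hTIio.symm ▸ Set.mem_Iio.mpr (by omega)
    exact hjT.2
  · intro j hj1 hjR
    rw [hyi1]
    by_contra hcon
    push_neg at hcon
    have hjT' : j ∈ T' := ⟨hjR, hcon⟩
    rw [hT'Iio] at hjT'
    have := Set.mem_Iio.mp hjT'
    omega
end
end

section
/- (Reordering lemma.) Let E ⊆ ℝ^N (N ≥ 2) be a finite set of R points satisfying (H1). Let {x_j}_{j=1}^R be a d-compatible enumeration of E for some d ∈ S, and assume ⟨x_i,d⟩ < ⟨x_p,d⟩ for some indices 1 ≤ i < p ≤ R. Then there exist a direction d′ ∈ S and a d′-compatible enumeration {y_j}_{j=1}^R of E with {x_1,…,x_{i−1}} ⊆ {y_1,…,y_{p−1}}, y_p = x_i, and ⟨y_{p−1},d′⟩ < ⟨y_p,d′⟩ < ⟨y_{p+1},d′⟩ (i.e. d′ strictly locates x_i at the p-position). -/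
open scoped RealInnerProductSpace
open Set

noncomputable section

lemma aux_sep {N : ℕ} (E : Set (Euc N)) (hEfin : E.Finite) (xb : Euc N)
    (H1 : xb ∉ convexHull ℝ (E \ {xb})) :
    ∃ e : Euc N, ∀ z ∈ E, z ≠ xb → ⟪z - xb, e⟫ < 0 := by
  have hcl : IsClosed (convexHull ℝ (E \ {xb})) :=
    ((hEfin.diff (t := {xb})).isCompact_convexHull (𝕜 := ℝ)).isClosed
  obtain ⟨f, u, hf1, hf2⟩ :=
    geometric_hahn_banach_closed_point (convex_convexHull ℝ _) hcl H1
  refine ⟨(InnerProductSpace.toDual ℝ (Euc N)).symm f, fun z hz hzx => ?_⟩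
  have h1 : f z < u := hf1 z (subset_convexHull ℝ _ ⟨hz, hzx⟩)
  have hz' : ⟪z, (InnerProductSpace.toDual ℝ (Euc N)).symm f⟫ = f z := by
    rw [real_inner_comm]; exact InnerProductSpace.toDual_symm_apply
  have hx' : ⟪xb, (InnerProductSpace.toDual ℝ (Euc N)).symm f⟫ = f xb := by
    rw [real_inner_comm]; exact InnerProductSpace.toDual_symm_apply
  rw [inner_sub_left, hz', hx']
  linarith

lemma aux_avoid {N : ℕ} (V : Finset (Euc N)) (U : Set (Euc N)) (hU : IsOpen U)
    (hne : U.Nonempty) (hV : (0 : Euc N) ∉ V) :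
    ∃ e ∈ U, ∀ v ∈ V, ⟪v, e⟫ ≠ 0 := by
  classical
  induction V using Finset.induction_on with
  | empty => obtain ⟨e, he⟩ := hne; exact ⟨e, he, by simp⟩
  | @insert a V ha IH =>
    have ha0 : a ≠ 0 := fun h => hV (by simp [h])
    obtain ⟨e, heU, he⟩ := IH (fun h => hV (Finset.mem_insert_of_mem h))
    have hopen : IsOpen (U ∩ ⋂ v ∈ V, {e : Euc N | ⟪v, e⟫ ≠ 0}) := by
      refine hU.inter (isOpen_biInter_finset fun v hv => ?_)
      have hc : Continuous fun e : Euc N => ⟪v, e⟫ := continuous_const.inner continuous_id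
      exact isOpen_compl_singleton.preimage hc
    have hmem : e ∈ U ∩ ⋂ v ∈ V, {e : Euc N | ⟪v, e⟫ ≠ 0} :=
      ⟨heU, Set.mem_iInter₂.mpr fun v hv => he v hv⟩
    obtain ⟨ε, hε, hball⟩ := Metric.isOpen_iff.mp hopen e hmem
    by_cases hae : ⟪a, e⟫ = 0
    · set c : ℝ := ε / (2 * ‖a‖) with hc
      have hapos : 0 < ‖a‖ := norm_pos_iff.mpr ha0
      have hcpos : 0 < c := by positivity
      have hkey : ‖a‖ * c = ε / 2 := by
        rw [hc]; field_simp
      have hmem' : e + c • a ∈ Metric.ball e ε := by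
        rw [Metric.mem_ball, dist_eq_norm]
        have h2 : e + c • a - e = c • a := by abel
        rw [h2, norm_smul, Real.norm_eq_abs, abs_of_pos hcpos]
        linarith [hkey]
      obtain ⟨heU', he'⟩ := hball hmem'
      refine ⟨e + c • a, heU', fun v hv => ?_⟩
      rcases Finset.mem_insert.mp hv with rfl | hv
      · rw [inner_add_right, hae, real_inner_smul_right, zero_add]
        have hvv : (0:ℝ) < ⟪v, v⟫ := by rw [real_inner_self_eq_norm_mul_norm]; positivity
        exact (mul_pos hcpos hvv).ne'
      · exact Set.mem_iInter₂.mp he' v hv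
    · refine ⟨e, heU, fun v hv => ?_⟩
      rcases Finset.mem_insert.mp hv with rfl | hv
      · exact hae
      · exact he v hv

lemma aux_seg {N : ℕ} (E : Set (Euc N)) (H1 : ∀ x ∈ E, x ∉ convexHull ℝ (E \ {x}))
    (xb u v : Euc N) (hxbE : xb ∈ E) (huE : u ∈ E) (hvE : v ∈ E)
    (huv : u ≠ v) (hxv : xb ≠ v) (a1 a2 : ℝ) (h1 : 0 < a1) (h12 : a1 < a2)
    (heq : a1 • (u - xb) = a2 • (v - xb)) : False := by
  have h2 : 0 < a2 := h1.trans h12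
  set lam : ℝ := a1 / a2 with hlam
  have hlam0 : 0 < lam := by positivity
  have hlam1 : lam < 1 := (div_lt_one h2).mpr h12
  have hv' : v = (1 - lam) • xb + lam • u := by
    have : v - xb = lam • (u - xb) := by
      rw [hlam, div_eq_inv_mul, mul_smul, heq, smul_smul, inv_mul_cancel₀ h2.ne', one_smul]
    have hv2 : v = xb + lam • (u - xb) := by
      rw [← this]; abel
    rw [hv2]; rw [smul_sub, sub_smul, one_smul]; abel
  have hseg : v ∈ segment ℝ xb u :=
    ⟨1 - lam, lam, by linarith, le_of_lt hlam0, by ring, hv'.symm⟩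
  have hsub : segment ℝ xb u ⊆ convexHull ℝ (E \ {v}) :=
    (convex_convexHull ℝ _).segment_subset
      (subset_convexHull ℝ _ ⟨hxbE, hxv⟩)
      (subset_convexHull ℝ _ ⟨huE, huv⟩)
  exact H1 v hvE (hsub hseg)

lemma aux_vne {N : ℕ} (E : Set (Euc N)) (H1 : ∀ x ∈ E, x ∉ convexHull ℝ (E \ {x}))
    (xb z w : Euc N) (hxbE : xb ∈ E) (hzE : z ∈ E) (hwE : w ∈ E)
    (hzx : z ≠ xb) (hwx : w ≠ xb) (hzw : z ≠ w) (az aw : ℝ)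
    (haz : 0 < az) (haw : 0 < aw) :
    az • (w - xb) - aw • (z - xb) ≠ 0 := by
  intro h0
  have heq : az • (w - xb) = aw • (z - xb) := sub_eq_zero.mp h0
  rcases lt_trichotomy az aw with hlt | heqa | hgt
  · exact aux_seg E H1 xb w z hxbE hwE hzE hzw.symm hzx.symm az aw haz hlt heq
  · subst heqa
    have : w - xb = z - xb := smul_right_injective _ (ne_of_gt haz) heq
    exact hzw (sub_left_inj.mp this).symm
  · exact aux_seg E H1 xb z w hxbE hzE hwE hzw hwx.symm aw az haw hgt heq.symm

lemma aux_pick : ∀ (k : ℕ) (s : Finset ℝ), 1 ≤ k → k ≤ s.card →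
    ∃ t, t ∉ s ∧ (s.filter (· < t)).card = k ∧ ∃ u ∈ s, u < t := by
  intro k
  induction k with
  | zero => intro s h; omega
  | succ k IH =>
    intro s _ hcard
    have hs : s.Nonempty := Finset.card_pos.mp (by omega)
    set μ := s.min' hs with hμ
    have hμs : μ ∈ s := s.min'_mem hs
    rcases Nat.eq_zero_or_pos k with rfl | hk
    · rcases Finset.eq_empty_or_nonempty (s.erase μ) with hse | hse
      · have hs1 : s = {μ} := by
          have := Finset.card_erase_of_mem hμs
          rw [hse] at this
          simp at this
          exact Finset.eq_singleton_iff_unique_mem.mpr ⟨hμs, fun y hy => by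
            by_contra hne
            exact (Finset.ne_empty_of_mem (Finset.mem_erase.mpr ⟨hne, hy⟩)) hse⟩
        refine ⟨μ + 1, ?_, ?_, μ, hμs, by linarith⟩
        · rw [hs1]; simp
        · rw [hs1, Finset.filter_singleton, if_pos (by linarith : μ < μ + 1)]
          simp
      · set μ' := (s.erase μ).min' hse with hμ'
        have hμ's : μ' ∈ s.erase μ := (s.erase μ).min'_mem hse
        have hμμ' : μ < μ' := by
          have h1 : μ ≤ μ' := s.min'_le _ (Finset.mem_of_mem_erase hμ's)
          have h2 : μ' ≠ μ := (Finset.mem_erase.mp hμ's).1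
          exact lt_of_le_of_ne h1 (Ne.symm h2)
        refine ⟨(μ + μ') / 2, ?_, ?_, μ, hμs, by linarith⟩
        · intro hts
          have : (μ + μ') / 2 ∈ s.erase μ :=
            Finset.mem_erase.mpr ⟨by intro hh; linarith, hts⟩
          have := (s.erase μ).min'_le _ this
          linarith
        · have : s.filter (· < (μ + μ') / 2) = {μ} := by
            ext a
            simp only [Finset.mem_filter, Finset.mem_singleton]
            constructor
            · rintro ⟨has, hat⟩
              by_contra hne
              have : a ∈ s.erase μ := Finset.mem_erase.mpr ⟨hne, has⟩
              have := (s.erase μ).min'_le _ this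
              linarith
            · rintro rfl
              exact ⟨hμs, by linarith⟩
          rw [this]; simp
    · have hcard' : k ≤ (s.erase μ).card := by
        rw [Finset.card_erase_of_mem hμs]; omega
      obtain ⟨t, hts, hcardt, u, hus, hut⟩ := IH (s.erase μ) hk hcard'
      have hμu : μ < u := by
        have h1 : μ ≤ u := s.min'_le _ (Finset.mem_of_mem_erase hus)
        have h2 : u ≠ μ := (Finset.mem_erase.mp hus).1
        exact lt_of_le_of_ne h1 (Ne.symm h2)
      have hμt : μ < t := hμu.trans hut
      refine ⟨t, ?_, ?_, u, Finset.mem_of_mem_erase hus, hut⟩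
      · intro hts'
        exact hts (Finset.mem_erase.mpr ⟨by intro hh; linarith, hts'⟩)
      · have hfe : (s.erase μ).filter (· < t) = (s.filter (· < t)).erase μ := by
          rw [Finset.filter_erase]
        have hμf : μ ∈ s.filter (· < t) := Finset.mem_filter.mpr ⟨hμs, hμt⟩
        rw [hfe] at hcardt
        rw [Finset.card_erase_of_mem hμf] at hcardt
        omega

lemma aux_enum {N : ℕ} (E : Set (Euc N)) (hEfin : E.Finite) (R : ℕ)
    (hcard : hEfin.toFinset.card = R) (d' : Euc N) (xb : Euc N) (hxb : xb ∈ E)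
    (p : ℕ) (hp : p < R)
    (hcount : ((hEfin.toFinset).filter (fun z => ⟪z, d'⟫ < ⟪xb, d'⟫)).card = p)
    (hne : ∀ z ∈ E, z ≠ xb → ⟪z, d'⟫ ≠ ⟪xb, d'⟫) :
    ∃ y : ℕ → Euc N, IsCompatEnum E R d' y ∧ y p = xb := by
  classical
  set g : Fin R ≃ hEfin.toFinset := (Finset.equivFinOfCardEq hcard).symm with hg
  set f0 : Fin R → Euc N := fun j => (g j : Euc N) with hf0
  have hf0inj : Function.Injective f0 := fun j k h =>
    g.injective (Subtype.coe_injective h)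
  have hf0rng : Set.range f0 = E := by
    ext z
    constructor
    · rintro ⟨j, rfl⟩
      exact hEfin.mem_toFinset.mp (g j).2
    · intro hz
      exact ⟨g.symm ⟨z, hEfin.mem_toFinset.mpr hz⟩, by simp [hf0]⟩
  set σ : Equiv.Perm (Fin R) := Tuple.sort (fun j => ⟪f0 j, d'⟫) with hσ
  set f : Fin R → Euc N := fun j => f0 (σ j) with hf
  have hmono : Monotone fun j => ⟪f j, d'⟫ := Tuple.monotone_sort (fun j => ⟪f0 j, d'⟫)
  have hfinj : Function.Injective f := hf0inj.comp σ.injective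
  have hfrng : Set.range f = E := by
    rw [← hf0rng]
    exact σ.surjective.range_comp f0
  obtain ⟨q, hq⟩ : ∃ q, f q = xb := by rw [← Set.mem_range, hfrng]; exact hxb
  have himg : Finset.image f (Finset.Iio q) =
      hEfin.toFinset.filter (fun z => ⟪z, d'⟫ < ⟪xb, d'⟫) := by
    ext z
    simp only [Finset.mem_image, Finset.mem_filter, Finset.mem_Iio]
    constructor
    · rintro ⟨j, hj, rfl⟩
      have hmem : f j ∈ E := by rw [← hfrng]; exact ⟨j, rfl⟩
      refine ⟨hEfin.mem_toFinset.mpr hmem, ?_⟩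
      have h1 : ⟪f j, d'⟫ ≤ ⟪f q, d'⟫ := hmono (le_of_lt hj)
      have h2 : f j ≠ xb := by
        rw [← hq]; exact fun hc => (ne_of_lt hj) (hfinj hc)
      rw [hq] at h1
      exact lt_of_le_of_ne h1 (hne _ hmem h2)
    · rintro ⟨hz, hlt⟩
      have hmem : z ∈ E := hEfin.mem_toFinset.mp hz
      obtain ⟨j, rfl⟩ : ∃ j, f j = z := by rw [← Set.mem_range, hfrng]; exact hmem
      refine ⟨j, ?_, rfl⟩
      by_contra hc
      have : ⟪f q, d'⟫ ≤ ⟪f j, d'⟫ := hmono (le_of_not_gt hc)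
      rw [hq] at this
      linarith
  have hqp : (q : ℕ) = p := by
    have h1 := congrArg Finset.card himg
    rw [Finset.card_image_of_injective _ hfinj, hcount, Fin.card_Iio] at h1
    exact h1
  refine ⟨fun n => if h : n < R then f ⟨n, h⟩ else xb, ⟨?_, ?_, ?_⟩, ?_⟩
  · intro n hn m hm hnm
    simp only [Set.mem_Iio] at hn hm
    simp only [dif_pos hn, dif_pos hm] at hnm
    exact congrArg Fin.val (hfinj hnm)
  · ext z
    constructor
    · rintro ⟨n, hn, rfl⟩
      simp only [Set.mem_Iio] at hn
      simp only [dif_pos hn]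
      rw [← hfrng]; exact ⟨_, rfl⟩
    · intro hz
      obtain ⟨j, rfl⟩ : ∃ j, f j = z := by rw [← Set.mem_range, hfrng]; exact hz
      exact ⟨j, j.isLt, by simp only [dif_pos j.isLt]⟩
  · intro a b hab hbR
    have haR : a < R := lt_of_le_of_lt hab hbR
    simp only [dif_pos haR, dif_pos hbR]
    exact hmono (by exact hab)
  · simp only [dif_pos hp, ← hq]
    exact congrArg f (Fin.ext hqp.symm)

set_option maxHeartbeats 2000000 in
/-- Reordering lemma. Indices are 0-based: positions `i < p` here
correspond to positions `i+1 < p+1` of the paper. -/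
theorem reordering_lemma {N : ℕ} (hN : 2 ≤ N)
    (E : Set (Euc N)) (hEfin : E.Finite) (R : ℕ) (hR : R = E.ncard)
    (H1 : ∀ x ∈ E, x ∉ convexHull ℝ (E \ {x}))
    (d : Euc N) (hd : d ∈ sph N) (x : ℕ → Euc N) (hx : IsCompatEnum E R d x)
    (i p : ℕ) (hip : i < p) (hp : p < R)
    (h : ⟪x i, d⟫ < ⟪x p, d⟫) :
    ∃ d' ∈ sph N, ∃ y : ℕ → Euc N, IsCompatEnum E R d' y ∧
      x '' (Set.Iio i) ⊆ y '' (Set.Iio p) ∧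
      y p = x i ∧
      (∀ j < p, ⟪y j, d'⟫ < ⟪y p, d'⟫) ∧
      (∀ j : ℕ, p < j → j < R → ⟪y p, d'⟫ < ⟪y j, d'⟫) := by
  classical
  obtain ⟨hinj, himg, hmono⟩ := hx
  have hiR : i < R := lt_trans hip hp
  set xb := x i with hxbdef
  have hxbE : xb ∈ E := by rw [← himg]; exact ⟨i, hiR, rfl⟩
  set ℱ := hEfin.toFinset with hℱ
  have hmemℱ : ∀ z, z ∈ ℱ ↔ z ∈ E := fun z => hEfin.mem_toFinset
  have hcardℱ : ℱ.card = R := by rw [hR]; exact (Set.ncard_eq_toFinset_card E hEfin).symm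
  set a : Euc N → ℝ := fun z => ⟪z - xb, d⟫ with hadef
  set F := ℱ.erase xb with hF
  have hxbℱ : xb ∈ ℱ := (hmemℱ xb).mpr hxbE
  have hFcard : F.card = R - 1 := by rw [hF, Finset.card_erase_of_mem hxbℱ, hcardℱ]
  have hmemF : ∀ z, z ∈ F ↔ z ∈ E ∧ z ≠ xb := by
    intro z; rw [hF, Finset.mem_erase, hmemℱ]; tauto
  obtain ⟨e0, he0⟩ := aux_sep E hEfin xb (H1 xb hxbE)
  set U : Set (Euc N) := ⋂ z ∈ F, {e : Euc N | ⟪z - xb, e⟫ < 0} with hU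
  have hUopen : IsOpen U := isOpen_biInter_finset fun z hz =>
    isOpen_lt (continuous_const.inner continuous_id) continuous_const
  have hUne : U.Nonempty :=
    ⟨e0, Set.mem_iInter₂.mpr fun z hz => he0 z ((hmemF z).mp hz).1 ((hmemF z).mp hz).2⟩
  set V : Finset (Euc N) :=
    ((F ×ˢ F).filter (fun q => q.1 ≠ q.2 ∧ 0 < a q.1 ∧ 0 < a q.2)).image
      (fun q => a q.1 • (q.2 - xb) - a q.2 • (q.1 - xb)) with hV
  have hV0 : (0 : Euc N) ∉ V := by
    rw [hV]
    simp only [Finset.mem_image, Finset.mem_filter, Finset.mem_product, not_exists]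
    rintro ⟨z, w⟩ ⟨⟨⟨hzF, hwF⟩, hzw, haz, haw⟩, h0⟩
    exact aux_vne E H1 xb z w hxbE ((hmemF z).mp hzF).1 ((hmemF w).mp hwF).1
      ((hmemF z).mp hzF).2 ((hmemF w).mp hwF).2 hzw (a z) (a w) haz haw h0
  obtain ⟨e, heU, heV⟩ := aux_avoid V U hUopen hUne hV0
  set b : Euc N → ℝ := fun z => ⟪z - xb, e⟫ with hbdef
  have hbneg : ∀ z ∈ E, z ≠ xb → b z < 0 := fun z hz hzx =>
    Set.mem_iInter₂.mp heU z ((hmemF z).mpr ⟨hz, hzx⟩)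
  set T : Euc N → ℝ := fun z => a z / (-(b z)) with hTdef
  set P := F.filter (fun z => 0 < a z) with hP
  have hTinjP : Set.InjOn T P := by
    intro z hz w hw hTzw
    by_contra hzw
    have hzF := Finset.mem_filter.mp hz
    have hwF := Finset.mem_filter.mp hw
    have hvV : a z • (w - xb) - a w • (z - xb) ∈ V := by
      rw [hV]
      refine Finset.mem_image.mpr ⟨(z, w), ?_, rfl⟩
      exact Finset.mem_filter.mpr
        ⟨Finset.mem_product.mpr ⟨hzF.1, hwF.1⟩, hzw, hzF.2, hwF.2⟩
    have hinner := heV _ hvV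
    rw [inner_sub_left, real_inner_smul_left, real_inner_smul_left] at hinner
    change a z * b w - a w * b z ≠ 0 at hinner
    have hbz : b z < 0 := hbneg z ((hmemF z).mp hzF.1).1 ((hmemF z).mp hzF.1).2
    have hbw : b w < 0 := hbneg w ((hmemF w).mp hwF.1).1 ((hmemF w).mp hwF.1).2
    apply hinner
    have hdd := (div_eq_div_iff (ne_of_gt (by linarith : (0:ℝ) < -(b z)))
      (ne_of_gt (by linarith : (0:ℝ) < -(b w)))).mp hTzw
    nlinarith [hdd]
  set m := (F.filter (fun z => ¬ 0 < a z)).card with hm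
  have hmP : P.card + m = F.card := by
    rw [hm, hP]
    exact Finset.card_filter_add_card_filter_not _
  have hidx : ∀ z ∈ E, ∃ j, j < R ∧ x j = z := by
    intro z hz; rw [← himg] at hz; obtain ⟨j, hj, hjz⟩ := hz; exact ⟨j, hj, hjz⟩
  have hsubm : F.filter (fun z => ¬ 0 < a z) ⊆ ((Finset.range p).erase i).image x := by
    intro z hzm
    obtain ⟨hzF, hza⟩ := Finset.mem_filter.mp hzm
    obtain ⟨hzE, hzxb⟩ := (hmemF z).mp hzF
    obtain ⟨j, hjR, rfl⟩ := hidx z hzE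
    refine Finset.mem_image.mpr ⟨j, Finset.mem_erase.mpr ⟨?_, Finset.mem_range.mpr ?_⟩, rfl⟩
    · rintro rfl; exact hzxb rfl
    · by_contra hc
      push_neg at hc
      apply hza
      have h1 : ⟪x p, d⟫ ≤ ⟪x j, d⟫ := hmono p j hc hjR
      have h2 : a (x j) = ⟪x j, d⟫ - ⟪xb, d⟫ := by
        rw [hadef]; simp [inner_sub_left]
      rw [h2, hxbdef]
      linarith
  have hmlt : m < p := by
    have h1 := Finset.card_le_card hsubm
    have h2 : (((Finset.range p).erase i).image x).card ≤ p - 1 := by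
      refine le_trans Finset.card_image_le ?_
      rw [Finset.card_erase_of_mem (Finset.mem_range.mpr hip), Finset.card_range]
    rw [← hm] at h1
    omega
  set s := P.image T with hs
  have hscard : s.card = P.card := Finset.card_image_of_injOn hTinjP
  have hk1 : 1 ≤ p - m := by omega
  have hk2 : p - m ≤ s.card := by omega
  obtain ⟨t, hts, htc, u, hus, hut⟩ := aux_pick (p - m) s hk1 hk2
  have ht0 : 0 < t := by
    rw [hs] at hus
    obtain ⟨z, hzP, rfl⟩ := Finset.mem_image.mp hus
    obtain ⟨hzF, hza⟩ := Finset.mem_filter.mp hzP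
    have hbz : b z < 0 := hbneg z ((hmemF z).mp hzF).1 ((hmemF z).mp hzF).2
    have : 0 < T z := div_pos hza (by linarith)
    linarith
  set w : Euc N := d + t • e with hw
  have hinnerw : ∀ z : Euc N, ⟪z - xb, w⟫ = a z + t * b z := by
    intro z; rw [hw, inner_add_right, real_inner_smul_right]
  have claim1 : ∀ z ∈ E, z ≠ xb → ¬ 0 < a z → ⟪z - xb, w⟫ < 0 := by
    intro z hzE hzx hza
    rw [hinnerw]
    have hbz := hbneg z hzE hzx
    push_neg at hza
    nlinarith
  have claim2 : ∀ z ∈ E, z ≠ xb → 0 < a z → (⟪z - xb, w⟫ < 0 ↔ T z < t) := by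
    intro z hzE hzx hza
    rw [hinnerw]
    have hbz := hbneg z hzE hzx
    simp only [hTdef]
    rw [div_lt_iff₀ (by linarith : (0:ℝ) < -(b z))]
    have hring : t * -(b z) = -(t * b z) := by ring
    rw [hring]
    constructor
    · intro hlt; linarith
    · intro hlt; linarith
  have claim3 : ∀ z ∈ E, z ≠ xb → ⟪z - xb, w⟫ ≠ 0 := by
    intro z hzE hzx
    by_cases hza : 0 < a z
    · intro h0
      rw [hinnerw] at h0
      have hbz := hbneg z hzE hzx
      have hTz : T z = t := by
        simp only [hTdef]
        rw [div_eq_iff (by linarith : -(b z) ≠ 0)]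
        linarith
      apply hts
      rw [hs]
      exact Finset.mem_image.mpr
        ⟨z, Finset.mem_filter.mpr ⟨(hmemF z).mpr ⟨hzE, hzx⟩, hza⟩, hTz⟩
    · exact ne_of_lt (claim1 z hzE hzx hza)
  have hcountw : (ℱ.filter (fun z => ⟪z - xb, w⟫ < 0)).card = p := by
    have h1 : ℱ.filter (fun z => ⟪z - xb, w⟫ < 0) =
        F.filter (fun z => ⟪z - xb, w⟫ < 0) := by
      rw [hF, Finset.filter_erase]
      refine (Finset.erase_eq_of_notMem ?_).symm
      intro hc
      have := (Finset.mem_filter.mp hc).2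
      rw [sub_self, inner_zero_left] at this
      linarith
    have h2 := Finset.card_filter_add_card_filter_not
      (s := F.filter (fun z => ⟪z - xb, w⟫ < 0)) (p := fun z => 0 < a z)
    have h3 : (F.filter (fun z => ⟪z - xb, w⟫ < 0)).filter (fun z => 0 < a z)
        = P.filter (fun z => T z < t) := by
      rw [hP, Finset.filter_filter, Finset.filter_filter]
      apply Finset.filter_congr
      intro z hzF
      obtain ⟨hzE, hzx⟩ := (hmemF z).mp hzF
      constructor
      · rintro ⟨hlt, hza⟩
        exact ⟨hza, (claim2 z hzE hzx hza).mp hlt⟩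
      · rintro ⟨hza, hlt⟩
        exact ⟨(claim2 z hzE hzx hza).mpr hlt, hza⟩
    have h4 : (F.filter (fun z => ⟪z - xb, w⟫ < 0)).filter (fun z => ¬ 0 < a z)
        = F.filter (fun z => ¬ 0 < a z) := by
      rw [Finset.filter_filter]
      apply Finset.filter_congr
      intro z hzF
      obtain ⟨hzE, hzx⟩ := (hmemF z).mp hzF
      constructor
      · rintro ⟨_, hza⟩; exact hza
      · intro hza; exact ⟨claim1 z hzE hzx hza, hza⟩
    have h5 : (P.filter (fun z => T z < t)).card = (s.filter (· < t)).card := by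
      rw [hs, ← Finset.card_image_of_injOn
        (hTinjP.mono (Finset.coe_subset.mpr (Finset.filter_subset _ _)))]
      congr 1
      rw [Finset.filter_image]
    rw [h1, ← h2, h3, h4, h5, htc, ← hm]
    omega
  have hFne : F.Nonempty := Finset.card_pos.mp (by omega)
  obtain ⟨z0, hz0⟩ := hFne
  have hw0 : w ≠ 0 := by
    intro h0
    obtain ⟨hz0E, hz0x⟩ := (hmemF z0).mp hz0
    apply claim3 z0 hz0E hz0x
    rw [h0, inner_zero_right]
  have hnwpos : 0 < ‖w‖ := norm_pos_iff.mpr hw0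
  set d'' : Euc N := ‖w‖⁻¹ • w with hd''
  have hd'sph : d'' ∈ sph N := by
    rw [sph, mem_sphere_zero_iff_norm, hd'', norm_smul, norm_inv, norm_norm]
    field_simp
  have hscale : ∀ z : Euc N, ⟪z, d''⟫ = ‖w‖⁻¹ * ⟪z, w⟫ := by
    intro z; rw [hd'', real_inner_smul_right]
  have hlt' : ∀ z z' : Euc N, (⟪z, d''⟫ < ⟪z', d''⟫ ↔ ⟪z, w⟫ < ⟪z', w⟫) := by
    intro z z'; rw [hscale, hscale]
    exact mul_lt_mul_iff_right₀ (inv_pos.mpr hnwpos)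
  have hcount' : (ℱ.filter (fun z => ⟪z, d''⟫ < ⟪xb, d''⟫)).card = p := by
    rw [← hcountw]
    congr 1
    apply Finset.filter_congr
    intro z _
    simp only [hlt', inner_sub_left, sub_neg]
  have hne' : ∀ z ∈ E, z ≠ xb → ⟪z, d''⟫ ≠ ⟪xb, d''⟫ := by
    intro z hzE hzx heq
    apply claim3 z hzE hzx
    rw [hscale, hscale] at heq
    have h6 := mul_left_cancel₀ (inv_ne_zero hnwpos.ne') heq
    rw [inner_sub_left]
    linarith
  obtain ⟨y, hycompat, hyp⟩ := aux_enum E hEfin R hcardℱ d'' xb hxbE p hp hcount' hne'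
  obtain ⟨hyinj, hyimg, hymono⟩ := hycompat
  refine ⟨d'', hd'sph, y, ⟨hyinj, hyimg, hymono⟩, ?_, hyp, ?_, ?_⟩
  · rintro _ ⟨j, hj, rfl⟩
    simp only [Set.mem_Iio] at hj
    have hjR : j < R := lt_trans (lt_trans hj hip) hp
    have hxjE : x j ∈ E := by rw [← himg]; exact ⟨j, hjR, rfl⟩
    have hxjne : x j ≠ xb := by
      intro hc
      exact (Nat.ne_of_lt hj) (hinj (Set.mem_Iio.mpr hjR) (Set.mem_Iio.mpr hiR) hc)
    have hza : ¬ 0 < a (x j) := by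
      have h1 : ⟪x j, d⟫ ≤ ⟪x i, d⟫ := hmono j i (le_of_lt hj) hiR
      have h2 : a (x j) = ⟪x j, d⟫ - ⟪xb, d⟫ := by
        rw [hadef]; simp [inner_sub_left]
      rw [h2, hxbdef]
      linarith
    have hlt0 : ⟪x j, d''⟫ < ⟪xb, d''⟫ := by
      rw [hlt']
      have := claim1 (x j) hxjE hxjne hza
      rw [inner_sub_left] at this
      linarith
    have hxjE' : x j ∈ y '' (Set.Iio R) := by rw [hyimg]; exact hxjE
    obtain ⟨j', hj', hyj'⟩ := hxjE'
    simp only [Set.mem_Iio] at hj'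
    refine ⟨j', Set.mem_Iio.mpr ?_, hyj'⟩
    by_contra hc
    push_neg at hc
    have := hymono p j' hc hj'
    rw [hyp, hyj'] at this
    linarith
  · intro j hjp
    have hjR : j < R := lt_trans hjp hp
    have h1 : ⟪y j, d''⟫ ≤ ⟪y p, d''⟫ := hymono j p (le_of_lt hjp) hp
    have hyjE : y j ∈ E := by rw [← hyimg]; exact ⟨j, Set.mem_Iio.mpr hjR, rfl⟩
    have hyjne : y j ≠ xb := by
      rw [← hyp]
      intro hc
      exact (Nat.ne_of_lt hjp) (hyinj (Set.mem_Iio.mpr hjR) (Set.mem_Iio.mpr hp) hc)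
    refine lt_of_le_of_ne h1 ?_
    rw [hyp]
    exact hne' _ hyjE hyjne
  · intro j hpj hjR
    have h1 : ⟪y p, d''⟫ ≤ ⟪y j, d''⟫ := hymono p j (le_of_lt hpj) hjR
    have hyjE : y j ∈ E := by rw [← hyimg]; exact ⟨j, Set.mem_Iio.mpr hjR, rfl⟩
    have hyjne : y j ≠ xb := by
      rw [← hyp]
      intro hc
      exact (Nat.ne_of_lt hpj).symm (hyinj (Set.mem_Iio.mpr hjR) (Set.mem_Iio.mpr hp) hc)
    refine lt_of_le_of_ne h1 ?_
    rw [hyp]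
    exact (hne' _ hyjE hyjne).symm
end
end

section
/- Let ℜ₀ be a finite family of polytopes in ℝ^N satisfying (H1) and (H2), and let d₀ ∈ S. Then the following are equivalent: (i) C = Ω_{ℜ₀}(d₀) (i.e. C belongs to ℜ₁ = F(ℜ₀) as the dual polytope in direction d₀); (ii) card(F(C,d₀) ∩ E) ≥ r_min, i.e. the face F(C,d₀) = {x ∈ C : ⟨x,d₀⟩ = min_{z ∈ C} ⟨z,d₀⟩} contains at least r_min points of E. -/
open scoped RealInnerProductSpace
open Set

noncomputable section

/-- The face `F(Ω,d)` of `Ω` in direction `d` (the set of minimizers of `⟨·,d⟩` on `Ω`). -/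
def face {N : ℕ} (Ω : Set (Euc N)) (d : Euc N) : Set (Euc N) :=
  {x ∈ Ω | ∀ z ∈ Ω, ⟪x, d⟫ ≤ ⟪z, d⟫}



lemma convex_inner_le {N : ℕ} (d : Euc N) (r : ℝ) :
    Convex ℝ {y : Euc N | ⟪y, d⟫ ≤ r} :=
  convex_halfSpace_le ⟨fun a b => inner_add_left a b d, fun c a => real_inner_smul_left a d c⟩ r

lemma convex_inner_ge {N : ℕ} (d : Euc N) (r : ℝ) :
    Convex ℝ {y : Euc N | r ≤ ⟪y, d⟫} :=
  convex_halfSpace_ge ⟨fun a b => inner_add_left a b d, fun c a => real_inner_smul_left a d c⟩ r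

lemma extreme_of_not_mem_hull {N : ℕ} {A : Set (Euc N)} {x : Euc N}
    (hxA : x ∈ A) (hx : x ∉ convexHull ℝ (A \ {x})) :
    x ∈ Set.extremePoints ℝ (convexHull ℝ A) := by
  rcases eq_empty_or_nonempty (A \ {x}) with hemp | hne
  · have hAx : A = {x} := by
      apply Subset.antisymm
      · intro a ha
        by_contra hax
        exact (eq_empty_iff_forall_notMem.1 hemp a) ⟨ha, hax⟩
      · simpa using hxA
    rw [hAx, convexHull_singleton, extremePoints_singleton]
    rfl
  · have hA : A = insert x (A \ {x}) := by
      rw [insert_diff_singleton, insert_eq_of_mem hxA]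
    have hjoin : convexHull ℝ A = convexJoin ℝ {x} (convexHull ℝ (A \ {x})) := by
      calc convexHull ℝ A = convexHull ℝ (insert x (A \ {x})) := by rw [← hA]
      _ = convexJoin ℝ {x} (convexHull ℝ (A \ {x})) := convexHull_insert hne
    rw [mem_extremePoints_iff_forall_segment]
    refine ⟨subset_convexHull ℝ A hxA, ?_⟩
    intro x₁ hx₁ x₂ hx₂ hseg
    rw [hjoin, convexJoin_singleton_left, mem_iUnion₂] at hx₁ hx₂
    obtain ⟨b₁, hb₁, hx₁⟩ := hx₁
    obtain ⟨b₂, hb₂, hx₂⟩ := hx₂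
    obtain ⟨u₁, v₁, hu₁, hv₁, huv₁, hx₁⟩ := hx₁
    obtain ⟨u₂, v₂, hu₂, hv₂, huv₂, hx₂⟩ := hx₂
    obtain ⟨t₁, t₂, ht₁, ht₂, ht, hxseg⟩ := hseg
    set c : ℝ := t₁ * v₁ + t₂ * v₂ with hc
    have hexp : (1:ℝ) • x = (t₁ * u₁ + t₂ * u₂) • x + ((t₁ * v₁) • b₁ + (t₂ * v₂) • b₂) := by
      calc (1:ℝ) • x = t₁ • x₁ + t₂ • x₂ := by rw [one_smul]; exact hxseg.symm
      _ = t₁ • (u₁ • x + v₁ • b₁) + t₂ • (u₂ • x + v₂ • b₂) := by rw [hx₁, hx₂]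
      _ = (t₁ * u₁ + t₂ * u₂) • x + ((t₁ * v₁) • b₁ + (t₂ * v₂) • b₂) := by module
    have hcu : (t₁ * u₁ + t₂ * u₂) + c = 1 := by
      rw [hc]; linear_combination t₁ * huv₁ + t₂ * huv₂ + ht
    rcases eq_or_lt_of_le (show (0:ℝ) ≤ c by positivity) with hc0 | hcpos
    · -- c = 0 : endpoints are x
      have h1 : t₁ * v₁ = 0 ∧ t₂ * v₂ = 0 := by
        constructor <;> nlinarith [mul_nonneg ht₁ hv₁, mul_nonneg ht₂ hv₂]
      by_cases ht₁0 : t₁ = 0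
      · right
        have ht₂1 : t₂ = 1 := by linarith
        have hv₂0 : v₂ = 0 := by
          rcases mul_eq_zero.1 h1.2 with h | h
          · exfalso; rw [ht₂1] at h; norm_num at h
          · exact h
        have hu₂1 : u₂ = 1 := by linarith
        rw [← hx₂, hv₂0, hu₂1]; simp
      · left
        have hv₁0 : v₁ = 0 := by
          rcases mul_eq_zero.1 h1.1 with h | h
          · exact absurd h ht₁0
          · exact h
        have hu₁1 : u₁ = 1 := by linarith
        rw [← hx₁, hv₁0, hu₁1]; simp
    · -- c > 0 : x ∈ conv (A \ {x}), contradiction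
      exfalso
      apply hx
      have hz : ((t₁ * v₁) / c) • b₁ + ((t₂ * v₂) / c) • b₂ ∈ convexHull ℝ (A \ {x}) := by
        apply (convex_convexHull ℝ (A \ {x})) hb₁ hb₂
        · positivity
        · positivity
        · field_simp; exact hc.symm
      have h2 : c • x = (t₁ * v₁) • b₁ + (t₂ * v₂) • b₂ := by
        have h1s : c = 1 - (t₁ * u₁ + t₂ * u₂) := by linarith
        rw [h1s, sub_smul, hexp]
        abel
      have hcne : c ≠ 0 := ne_of_gt hcpos
      have hxz : x = ((t₁ * v₁) / c) • b₁ + ((t₂ * v₂) / c) • b₂ := by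
        apply smul_right_injective (Euc N) hcne
        show c • x = c • (((t₁ * v₁) / c) • b₁ + ((t₂ * v₂) / c) • b₂)
        rw [h2]
        match_scalars <;> field_simp
      rwa [← hxz] at hz

/-- Proposition `caracC`: `C ∈ ℜ₁` as the dual polytope in direction `d₀`
iff the face `F(C,d₀)` contains at least `r_min` points of `E`. -/
theorem whole_hull_in_dual_iff {N : ℕ} (ℛ₀ : Set (Set (Euc N))) (hfin : ℛ₀.Finite)
    (hpoly : ∀ Ω ∈ ℛ₀, IsPolytope Ω)
    (E : Set (Euc N)) (hE : E = extFam ℛ₀)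
    (C : Set (Euc N)) (hC : C = convexHull ℝ E)
    (rmin : ℕ) (hrmin : IsLeast {r : ℕ | ∃ Ω ∈ ℛ₀, r = (Ω ∩ E).ncard} rmin)
    (H1 : ∀ x ∈ E, x ∉ convexHull ℝ (E \ {x}))
    (H2 : ∀ A ⊆ E, A.ncard = rmin → convexHull ℝ A ∈ ℛ₀)
    (d₀ : Euc N) (hd₀ : d₀ ∈ sph N) :
    C = dualPoly ℛ₀ d₀ ↔ rmin ≤ ((face C d₀) ∩ E).ncard := by
  have hEfin : E.Finite := by
    rw [hE]; exact hfin.biUnion (fun Ω hΩ => (hpoly Ω hΩ).2.2.2)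
  obtain ⟨Ω₁, hΩ₁, hrmin₁⟩ := hrmin.1
  have hsubE : ∀ Ω ∈ ℛ₀, Set.extremePoints ℝ Ω ⊆ E := by
    intro Ω hΩ
    rw [hE]
    exact subset_biUnion_of_mem hΩ
  have hEC : E ⊆ C := hC ▸ subset_convexHull ℝ E
  have hΩint : ∀ Ω ∈ ℛ₀, (Ω ∩ E).Nonempty := by
    intro Ω hΩ
    obtain ⟨p, hp⟩ := (hpoly Ω hΩ).2.2.1.extremePoints_nonempty (hpoly Ω hΩ).1
    exact ⟨p, extremePoints_subset hp, hsubE Ω hΩ hp⟩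
  have hEne : E.Nonempty := by
    obtain ⟨p, hp⟩ := hΩint Ω₁ hΩ₁; exact ⟨p, hp.2⟩
  have hrpos : 1 ≤ rmin := by
    have h1 : 0 < (Ω₁ ∩ E).ncard :=
      (Set.ncard_pos (hEfin.subset inter_subset_right)).2 (hΩint Ω₁ hΩ₁)
    omega
  set U : Set (Euc N) := ⋃ Ω ∈ ℛ₀, activeExt Ω d₀ with hU
  have hdp : dualPoly ℛ₀ d₀ = convexHull ℝ U := rfl
  have hUE : U ⊆ E := by
    intro y hy
    obtain ⟨Ω, hΩ, hyΩ⟩ := Set.mem_iUnion₂.1 hy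
    exact hsubE Ω hΩ hyΩ.1
  have hkey : C = dualPoly ℛ₀ d₀ ↔ E ⊆ U := by
    constructor
    · intro h x hxE
      by_contra hxU
      apply H1 x hxE
      have hsub : U ⊆ E \ {x} := fun y hy => ⟨hUE hy, fun h' => hxU (h' ▸ hy)⟩
      have hxC : x ∈ dualPoly ℛ₀ d₀ := h ▸ hEC hxE
      rw [hdp] at hxC
      exact convexHull_mono hsub hxC
    · intro h
      refine Subset.antisymm ?_ ?_
      · rw [hC, hdp]; exact convexHull_mono h
      · rw [hC, hdp]; exact convexHull_mono hUE
  constructor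
  · intro h
    have hEU := hkey.1 h
    obtain ⟨x₀, hx₀E, hx₀min⟩ := Set.exists_min_image E (fun y => ⟪y, d₀⟫) hEfin hEne
    have hminC : ∀ z ∈ C, ⟪x₀, d₀⟫ ≤ ⟪z, d₀⟫ := by
      intro z hz
      rw [hC] at hz
      exact convexHull_min (fun y hy => hx₀min y hy) (convex_inner_ge d₀ ⟪x₀, d₀⟫) hz
    obtain ⟨Ω, hΩ, hx₀act⟩ := Set.mem_iUnion₂.1 (hEU hx₀E)
    have hCcl : IsClosed C := by
      rw [hC]; exact (Set.Finite.isCompact_convexHull (𝕜 := ℝ) hEfin).isClosed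
    have hΩsub : Ω ⊆ C := by
      have hkm := closure_convexHull_extremePoints (hpoly Ω hΩ).2.2.1 (hpoly Ω hΩ).2.1
      rw [← hkm]
      have h1 : convexHull ℝ (Set.extremePoints ℝ Ω) ⊆ C := by
        rw [hC]; exact convexHull_mono (hsubE Ω hΩ)
      calc closure (convexHull ℝ (Set.extremePoints ℝ Ω)) ⊆ closure C := closure_mono h1
      _ = C := hCcl.closure_eq
    have hΩface : Ω ∩ E ⊆ face C d₀ ∩ E := by
      rintro y ⟨hyΩ, hyE⟩
      refine ⟨⟨hΩsub hyΩ, fun z hz => ?_⟩, hyE⟩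
      exact le_trans (hx₀act.2 y hyΩ) (hminC z hz)
    calc rmin ≤ (Ω ∩ E).ncard := hrmin.2 ⟨Ω, hΩ, rfl⟩
    _ ≤ ((face C d₀) ∩ E).ncard :=
        Set.ncard_le_ncard hΩface (hEfin.subset inter_subset_right)
  · intro hcard
    apply hkey.2
    intro x hxE
    set S0 : Set (Euc N) := (face C d₀ ∩ E) \ {x} with hS0
    have hS0fin : S0.Finite := (hEfin.subset inter_subset_right).diff
    have hle : rmin - 1 ≤ S0.ncard := by
      have h2 : face C d₀ ∩ E ⊆ insert x S0 := by
        intro y hy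
        by_cases hyx : y = x
        · exact hyx ▸ mem_insert x S0
        · exact mem_insert_of_mem x ⟨hy, hyx⟩
      have h1 : (face C d₀ ∩ E).ncard ≤ S0.ncard + 1 :=
        le_trans (Set.ncard_le_ncard h2 (hS0fin.insert x)) (Set.ncard_insert_le x S0)
      omega
    obtain ⟨A', hA'sub, hA'card⟩ := Set.exists_subset_card_eq hle
    have hA'fin : A'.Finite := hS0fin.subset hA'sub
    have hxA' : x ∉ A' := fun h => (hA'sub h).2 rfl
    set A : Set (Euc N) := insert x A' with hA
    have hAE : A ⊆ E := insert_subset hxE (fun y hy => (hA'sub hy).1.2)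
    have hAcard : A.ncard = rmin := by
      rw [hA, Set.ncard_insert_of_notMem hxA' hA'fin, hA'card]; omega
    have hΩA : convexHull ℝ A ∈ ℛ₀ := H2 A hAE hAcard
    have hxext : x ∈ Set.extremePoints ℝ (convexHull ℝ A) := by
      apply extreme_of_not_mem_hull (mem_insert x A')
      intro hmem
      apply H1 x hxE
      refine convexHull_mono ?_ hmem
      intro y hy
      exact ⟨hAE hy.1, hy.2⟩
    have hxmax : ∀ y ∈ convexHull ℝ A, ⟪y, d₀⟫ ≤ ⟪x, d₀⟫ := by
      intro y hy
      refine convexHull_min ?_ (convex_inner_le d₀ ⟪x, d₀⟫) hy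
      intro a ha
      rcases mem_insert_iff.1 ha with rfl | ha'
      · exact Set.mem_setOf.2 le_rfl
      · exact (hA'sub ha').1.1.2 x (hEC hxE)
    exact Set.mem_biUnion hΩA ⟨hxext, hxmax⟩
end
end

section
/- Let ℜ₀ be a finite family of polytopes in ℝ^N satisfying (H1) and (H2). Then ℜ₁ = F(ℜ₀) does not contain any polytope of the form conv(E \ {x₁,…,x_k}) where x₁,…,x_k ∈ E are distinct and k ≥ r_min; that is, for every d ∈ S and every set {x₁,…,x_k} of k ≥ r_min distinct points of E, Ω_{ℜ₀}(d) ≠ conv(E \ {x₁,…,x_k}). -/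
open scoped RealInnerProductSpace
open Set

noncomputable section

/-- Any nonempty compact set in `ℝ^N` has an extreme point maximizing `⟪·, d⟫`. -/
lemma exists_active_ext {N : ℕ} {K : Set (Euc N)} (hK : IsCompact K) (hne : K.Nonempty)
    (d : Euc N) : ∃ x ∈ Set.extremePoints ℝ K, ∀ y ∈ K, ⟪y, d⟫ ≤ ⟪x, d⟫ := by
  set l : Euc N →L[ℝ] ℝ := innerSL ℝ d with hl
  have hexp : IsExposed ℝ K (l.toExposed K) := ContinuousLinearMap.toExposed.isExposed
  have hFne : (l.toExposed K).Nonempty := by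
    obtain ⟨x, hxK, hmax⟩ := hK.exists_isMaxOn hne l.continuous.continuousOn
    exact ⟨x, hxK, fun y hy => hmax hy⟩
  obtain ⟨x, hx⟩ := (hexp.isCompact hK).extremePoints_nonempty hFne
  refine ⟨x, hexp.isExtreme.extremePoints_subset_extremePoints hx, fun y hy => ?_⟩
  have := hx.1.2 y hy
  have h1 : (⟪y,d⟫:ℝ) = l y := (real_inner_comm y d).symm
  have h2 : (⟪x,d⟫:ℝ) = l x := (real_inner_comm x d).symm
  rw [h1, h2]; exact this

/-- Proposition `factminpol`: `ℜ₁` contains no polytope of the form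
`conv (E \ A)` with `A ⊆ E` of cardinality at least `r_min`. -/
theorem no_small_complement_in_dual {N : ℕ} (ℛ₀ : Set (Set (Euc N))) (hfin : ℛ₀.Finite)
    (hpoly : ∀ Ω ∈ ℛ₀, IsPolytope Ω)
    (E : Set (Euc N)) (hE : E = extFam ℛ₀)
    (rmin : ℕ) (hrmin : IsLeast {r : ℕ | ∃ Ω ∈ ℛ₀, r = (Ω ∩ E).ncard} rmin)
    (H1 : ∀ x ∈ E, x ∉ convexHull ℝ (E \ {x}))
    (H2 : ∀ A ⊆ E, A.ncard = rmin → convexHull ℝ A ∈ ℛ₀) :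
    ∀ d ∈ sph N, ∀ A ⊆ E, rmin ≤ A.ncard →
      dualPoly ℛ₀ d ≠ convexHull ℝ (E \ A) := by
  intro d _ A hA hcard heq
  have hEfin : E.Finite := by
    rw [hE]; exact hfin.biUnion fun Ω hΩ => (hpoly Ω hΩ).2.2.2
  -- pick B ⊆ A with |B| = rmin
  obtain ⟨B, hBA, hBcard⟩ := Set.exists_subset_card_eq hcard
  have hBE : B ⊆ E := hBA.trans hA
  have hBmem : convexHull ℝ B ∈ ℛ₀ := H2 B hBE hBcard
  -- rmin > 0, hence B nonempty
  have hrpos : 0 < rmin := by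
    obtain ⟨Ω, hΩ, hr⟩ := hrmin.1
    have hp := hpoly Ω hΩ
    obtain ⟨x, hx⟩ := hp.2.2.1.extremePoints_nonempty hp.1
    have hxE : x ∈ E := by
      rw [hE]; exact Set.mem_biUnion hΩ hx
    have hne : (Ω ∩ E).Nonempty := ⟨x, hx.1, hxE⟩
    rw [hr]
    exact (Set.ncard_pos (hEfin.subset inter_subset_right)).2 hne
  have hBne : B.Nonempty := by
    rw [← Set.ncard_pos (hEfin.subset hBE)] at *
    omega
  -- an extreme point of conv B maximizing ⟪·, d⟫
  have hBfin : B.Finite := hEfin.subset hBE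
  obtain ⟨x, hxext, hxmax⟩ := exists_active_ext (hBfin.isCompact_convexHull (𝕜 := ℝ))
    (hBne.mono (subset_convexHull ℝ B)) d
  have hxB : x ∈ B := extremePoints_convexHull_subset hxext
  have hxE : x ∈ E := hBE hxB
  -- x belongs to the dual polytope
  have hxdual : x ∈ dualPoly ℛ₀ d := by
    apply subset_convexHull ℝ _
    exact Set.mem_biUnion hBmem ⟨hxext, hxmax⟩
  rw [heq] at hxdual
  have : x ∈ convexHull ℝ (E \ {x}) := by
    refine convexHull_mono ?_ hxdual
    exact diff_subset_diff_right (singleton_subset_iff.2 (hBA hxB))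
  exact H1 x hxE this
end
end

section
/- (Characterization of polytopes in ℜ₁.) Let ℜ₀ be a finite family of polytopes in ℝ^N satisfying (H1) and (H2), with 1 < r_min < R. Then a polytope Ω belongs to ℜ₁ = F(ℜ₀) if and only if there exist k with 0 ≤ k < r_min and a direction d ∈ S with a d-compatible enumeration {x′_i}_{i=1}^R of E such that Ω = conv(E \ {x′_1,…,x′_k}) (with {x′_1,…,x′_k} = ∅ when k = 0) and ⟨x′_k,d⟩ < ⟨x′_{k+1},d⟩ = ⋯ = ⟨x′_{r_min},d⟩ when k ≥ 1, respectively card(F(C,d) ∩ E) ≥ r_min when k = 0. -/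
open scoped RealInnerProductSpace
open Set

noncomputable section

namespace DFC

variable {N : ℕ}

lemma inner_isLinear (d : Euc N) : IsLinearMap ℝ (fun y : Euc N => ⟪y, d⟫) :=
  ⟨fun a b => inner_add_left a b d, fun r a => real_inner_smul_left a d r⟩

lemma hull_le_half {s : Set (Euc N)} {d : Euc N} {c : ℝ}
    (h : ∀ y ∈ s, ⟪y, d⟫ ≤ c) {y : Euc N} (hy : y ∈ convexHull ℝ s) : ⟪y, d⟫ ≤ c :=
  convexHull_min h (convex_halfSpace_le (inner_isLinear d) c) hy

lemma hull_ge_half {s : Set (Euc N)} {d : Euc N} {c : ℝ}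
    (h : ∀ y ∈ s, c ≤ ⟪y, d⟫) {y : Euc N} (hy : y ∈ convexHull ℝ s) : c ≤ ⟪y, d⟫ :=
  convexHull_min h (convex_halfSpace_ge (inner_isLinear d) c) hy

lemma mem_extremePoints_hull {s : Set (Euc N)} {x : Euc N} (hs : s.Finite)
    (hxs : x ∈ s) (hx : x ∉ convexHull ℝ (s \ {x})) :
    x ∈ Set.extremePoints ℝ (convexHull ℝ s) := by
  by_cases hne : (s \ {x}).Nonempty
  · obtain ⟨f, c, hfc, hcx⟩ := geometric_hahn_banach_closed_point
      (convex_convexHull ℝ _) ((hs.diff).isCompact_convexHull ℝ).isClosed hx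
    have hmax : ∀ y ∈ convexHull ℝ s, f y ≤ f x := by
      refine convexHull_min ?_ (convex_halfSpace_le (LinearMap.isLinear (f : (Euc N) →ₗ[ℝ] ℝ)) (f x))
      intro y hy
      show f y ≤ f x
      by_cases hyx : y = x
      · rw [hyx]
      · exact le_of_lt ((hfc y (subset_convexHull ℝ _ ⟨hy, hyx⟩)).trans hcx)
    have hxhull : x ∈ convexHull ℝ s := subset_convexHull ℝ _ hxs
    have hkey : ∀ z ∈ convexHull ℝ s, f z = f x → z = x := by
      intro z hz hfz
      have hins : insert x (s \ {x}) = s := by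
        rw [Set.insert_diff_singleton, Set.insert_eq_self.mpr hxs]
      rw [← hins, convexHull_insert hne, mem_convexJoin] at hz
      obtain ⟨x0, hx0, p, hp, hzseg⟩ := hz
      rw [Set.eq_of_mem_singleton hx0] at hzseg
      obtain ⟨a, b, ha, hb, hab, rfl⟩ := hzseg
      have hfp : f p < f x := (hfc p hp).trans hcx
      have hval : a * f x + b * f p = f x := by
        simpa [map_add, map_smul, smul_eq_mul] using hfz
      have h4 : a * f x + b * f x = f x := by rw [← add_mul, hab, one_mul]
      have hb0 : b = 0 := by
        by_contra hbne
        have hbpos : 0 < b := lt_of_le_of_ne hb (Ne.symm hbne)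
        have := mul_lt_mul_of_pos_left hfp hbpos
        linarith
      have ha1 : a = 1 := by linarith
      rw [hb0, ha1, one_smul, zero_smul, add_zero]
    rw [mem_extremePoints_iff_forall_segment]
    refine ⟨hxhull, ?_⟩
    intro x₁ hx₁ x₂ hx₂ hseg
    obtain ⟨a, b, ha, hb, hab, hsum⟩ := hseg
    have h₁ : f x₁ ≤ f x := hmax _ hx₁
    have h₂ : f x₂ ≤ f x := hmax _ hx₂
    have hval : a * f x₁ + b * f x₂ = f x := by
      rw [← hsum]; simp [map_add, map_smul, smul_eq_mul]
    have h4 : a * f x + b * f x = f x := by rw [← add_mul, hab, one_mul]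
    by_cases ha0 : a = 0
    · right
      apply hkey _ hx₂
      have hb1 : b = 1 := by linarith
      rw [ha0, hb1] at hval
      linarith
    · left
      apply hkey _ hx₁
      have hapos : 0 < a := lt_of_le_of_ne ha (Ne.symm ha0)
      have h3 : b * f x₂ ≤ b * f x := mul_le_mul_of_nonneg_left h₂ hb
      have h5 : a * f x ≤ a * f x₁ := by linarith
      exact le_antisymm h₁ (le_of_mul_le_mul_left h5 hapos)
  · have hsx : s = {x} := by
      apply Set.Subset.antisymm _ (by simpa using hxs)
      intro y hy
      by_contra h
      exact hne ⟨y, hy, h⟩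
    rw [hsx, convexHull_singleton, extremePoints_singleton]
    exact rfl


lemma exists_compatEnum (E : Set (Euc N)) (hEfin : E.Finite) (R : ℕ)
    (hR : R = E.ncard) (d : Euc N) : ∃ x' : ℕ → Euc N, IsCompatEnum E R d x' := by
  classical
  set l : List (Euc N) :=
    hEfin.toFinset.toList.mergeSort (fun a b => decide (⟪a, d⟫ ≤ ⟪b, d⟫)) with hl
  have hperm : l.Perm hEfin.toFinset.toList := List.mergeSort_perm _ _
  have hnodup : l.Nodup := hperm.nodup_iff.mpr (Finset.nodup_toList _)
  have hmem : ∀ y, y ∈ l ↔ y ∈ E := fun y => by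
    rw [hperm.mem_iff, Finset.mem_toList, Set.Finite.mem_toFinset]
  have hlen : l.length = R := by
    rw [hperm.length_eq, Finset.length_toList, hR, Set.ncard_eq_toFinset_card _ hEfin]
  have hsort : l.Pairwise (fun a b => ⟪a, d⟫ ≤ ⟪b, d⟫) := by
    have hs := List.pairwise_mergeSort (le := fun a b : Euc N => decide (⟪a, d⟫ ≤ ⟪b, d⟫))
      (fun a b c h1 h2 => by
        simp only [decide_eq_true_eq] at *; linarith)
      (fun a b => by
        simp only [Bool.or_eq_true, decide_eq_true_eq]; exact le_total _ _)
      hEfin.toFinset.toList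
    rw [← hl] at hs
    exact hs.imp (fun h => by simpa using h)
  refine ⟨fun i => l.getD i 0, ?_, ?_, ?_⟩
  · intro i hi j hj heq
    rw [Set.mem_Iio] at hi hj
    change l.getD i 0 = l.getD j 0 at heq
    rw [List.getD_eq_getElem l 0 (by omega : i < l.length),
        List.getD_eq_getElem l 0 (by omega : j < l.length)] at heq
    exact (List.Nodup.getElem_inj_iff hnodup).mp heq
  · ext y
    constructor
    · rintro ⟨i, hi, rfl⟩
      rw [Set.mem_Iio] at hi
      show l.getD i 0 ∈ E
      rw [← hmem, List.getD_eq_getElem l 0 (by omega : i < l.length)]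
      exact List.getElem_mem _
    · intro hy
      rw [← hmem, List.mem_iff_getElem] at hy
      obtain ⟨i, hi, rfl⟩ := hy
      exact ⟨i, by rw [Set.mem_Iio]; omega, show l.getD i 0 = l[i] from List.getD_eq_getElem l 0 hi⟩
  · intro i j hij hjR
    rcases eq_or_lt_of_le hij with rfl | hlt
    · exact le_refl _
    · show ⟪l.getD i 0, d⟫ ≤ ⟪l.getD j 0, d⟫
      rw [List.getD_eq_getElem l 0 (by omega : i < l.length),
          List.getD_eq_getElem l 0 (by omega : j < l.length)]
      exact List.pairwise_iff_getElem.mp hsort i j _ _ hlt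



def Gset (E : Set (Euc N)) (rmin : ℕ) (d : Euc N) : Set (Euc N) :=
  {x | x ∈ E ∧ rmin ≤ {y | y ∈ E ∧ ⟪y, d⟫ ≤ ⟪x, d⟫}.ncard}

lemma ncard_Iio (n : ℕ) : (Set.Iio n).ncard = n := by
  rw [← Finset.coe_range, Set.ncard_coe_finset, Finset.card_range]

lemma biUnion_activeExt (ℛ₀ : Set (Set (Euc N))) (E : Set (Euc N)) (hE : E = extFam ℛ₀)
    (hEfin : E.Finite) (rmin : ℕ) (hrpos : 1 ≤ rmin)
    (hlb : ∀ Ω ∈ ℛ₀, rmin ≤ (Ω ∩ E).ncard)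
    (H1 : ∀ x ∈ E, x ∉ convexHull ℝ (E \ {x}))
    (H2 : ∀ A ⊆ E, A.ncard = rmin → convexHull ℝ A ∈ ℛ₀)
    (d : Euc N) :
    ⋃ Ω ∈ ℛ₀, activeExt Ω d = Gset E rmin d := by
  ext x
  simp only [Set.mem_iUnion]
  constructor
  · rintro ⟨Ω, hΩ, hxe, hxmax⟩
    have hxE : x ∈ E := by
      rw [hE]; exact Set.mem_biUnion hΩ hxe
    refine ⟨hxE, le_trans (hlb Ω hΩ) (Set.ncard_le_ncard ?_ (hEfin.subset (fun y hy => hy.1)))⟩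
    rintro y ⟨hyΩ, hyE⟩
    exact ⟨hyE, hxmax y hyΩ⟩
  · rintro ⟨hxE, hcard⟩
    set T := {y | y ∈ E ∧ ⟪y, d⟫ ≤ ⟪x, d⟫} with hT
    have hTE : T ⊆ E := fun y hy => hy.1
    have hTfin : T.Finite := hEfin.subset hTE
    have hxT : x ∈ T := ⟨hxE, le_refl _⟩
    have h1 : rmin - 1 ≤ (T \ {x}).ncard := by
      have := Set.ncard_diff_singleton_add_one hxT hTfin
      omega
    obtain ⟨A₀, hA₀T, hA₀c⟩ := Set.exists_subset_card_eq h1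
    have hxA₀ : x ∉ A₀ := fun h => (hA₀T h).2 rfl
    have hAc : (insert x A₀).ncard = rmin := by
      rw [Set.ncard_insert_of_notMem hxA₀ ((hTfin.diff).subset hA₀T)]
      omega
    have hAT : insert x A₀ ⊆ T := Set.insert_subset hxT (hA₀T.trans Set.diff_subset)
    have hAE : insert x A₀ ⊆ E := hAT.trans hTE
    refine ⟨convexHull ℝ (insert x A₀), H2 _ hAE hAc, ?_, ?_⟩
    · refine mem_extremePoints_hull (hEfin.subset hAE) (Set.mem_insert x A₀) (fun h => ?_)
      exact H1 x hxE (convexHull_mono (Set.diff_subset_diff_left hAE) h)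
    · intro y hy
      exact hull_le_half (fun z hz => (hAT hz).2) hy

lemma gset_eq (E : Set (Euc N)) (hEfin : E.Finite) {R rmin k : ℕ} (hR : R = E.ncard)
    (hrmin : 1 ≤ rmin) (hrR : rmin ≤ R) (hk : k ≤ rmin - 1)
    {d : Euc N} {x' : ℕ → Euc N} (he : IsCompatEnum E R d x')
    (hiff : ∀ i < R, (⟪x' i, d⟫ < ⟪x' (rmin - 1), d⟫ ↔ i < k)) :
    Gset E rmin d = E \ x' '' (Set.Iio k) := by
  obtain ⟨hinj, himg, hmono⟩ := he
  have hmem : ∀ i < R, x' i ∈ E := fun i hi =>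
    himg ▸ Set.mem_image_of_mem x' (Set.mem_Iio.mpr hi)
  ext z
  constructor
  · rintro ⟨hzE, hcard⟩
    refine ⟨hzE, fun hzim => ?_⟩
    obtain ⟨j, hj, rfl⟩ := hzim
    rw [Set.mem_Iio] at hj
    have hjR : j < R := by omega
    have hjlt : ⟪x' j, d⟫ < ⟪x' (rmin - 1), d⟫ := (hiff j hjR).mpr hj
    -- T ⊆ x' '' Iio (rmin - 1)
    have hsub : {y | y ∈ E ∧ ⟪y, d⟫ ≤ ⟪x' j, d⟫} ⊆ x' '' (Set.Iio (rmin - 1)) := by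
      rintro y ⟨hyE, hyle⟩
      rw [← himg] at hyE
      obtain ⟨m, hm, rfl⟩ := hyE
      rw [Set.mem_Iio] at hm
      refine ⟨m, Set.mem_Iio.mpr ?_, rfl⟩
      by_contra hmge
      exact absurd (le_trans (hmono (rmin - 1) m (by omega) hm) hyle) (not_le.mpr hjlt)
    have hle : {y | y ∈ E ∧ ⟪y, d⟫ ≤ ⟪x' j, d⟫}.ncard ≤ rmin - 1 := by
      calc {y | y ∈ E ∧ ⟪y, d⟫ ≤ ⟪x' j, d⟫}.ncard
          ≤ (x' '' (Set.Iio (rmin - 1))).ncard :=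
            Set.ncard_le_ncard hsub ((Set.finite_Iio _).image _)
        _ ≤ (Set.Iio (rmin - 1)).ncard := Set.ncard_image_le (Set.finite_Iio _)
        _ = rmin - 1 := ncard_Iio _
    omega
  · rintro ⟨hzE, hzim⟩
    have hzE' := hzE
    rw [← himg] at hzE'
    obtain ⟨i, hi, rfl⟩ := hzE'
    rw [Set.mem_Iio] at hi
    have hik : ¬ i < k := fun h => hzim ⟨i, Set.mem_Iio.mpr h, rfl⟩
    have hge : ⟪x' (rmin - 1), d⟫ ≤ ⟪x' i, d⟫ := not_lt.mp (fun h => hik ((hiff i hi).mp h))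
    refine ⟨hzE, ?_⟩
    have hsub : x' '' (Set.Iio rmin) ⊆ {y | y ∈ E ∧ ⟪y, d⟫ ≤ ⟪x' i, d⟫} := by
      rintro y ⟨j, hj, rfl⟩
      rw [Set.mem_Iio] at hj
      exact ⟨hmem j (by omega), le_trans (hmono j (rmin - 1) (by omega) (by omega)) hge⟩
    calc rmin = (Set.Iio rmin).ncard := (ncard_Iio _).symm
      _ = (x' '' (Set.Iio rmin)).ncard :=
          (Set.ncard_image_of_injOn (hinj.mono (fun m hm => Set.mem_Iio.mpr
            (lt_of_lt_of_le (Set.mem_Iio.mp hm) hrR)))).symm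
      _ ≤ _ := Set.ncard_le_ncard hsub (hEfin.subset (fun y hy => hy.1))



end DFC

/-- Characterization of polytopes in `ℜ₁`. Indices of the enumeration
are 0-based: the paper's `x′_1,…,x′_k` is `x' 0, …, x' (k-1)` here. -/
theorem dual_family_characterization {N : ℕ} (ℛ₀ : Set (Set (Euc N))) (hfin : ℛ₀.Finite)
    (hpoly : ∀ Ω ∈ ℛ₀, IsPolytope Ω)
    (E : Set (Euc N)) (hE : E = extFam ℛ₀) (R : ℕ) (hR : R = E.ncard)
    (C : Set (Euc N)) (hC : C = convexHull ℝ E)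
    (rmin : ℕ) (hrmin : IsLeast {r : ℕ | ∃ Ω ∈ ℛ₀, r = (Ω ∩ E).ncard} rmin)
    (hrmin1 : 1 < rmin) (hrminR : rmin < R)
    (H1 : ∀ x ∈ E, x ∉ convexHull ℝ (E \ {x}))
    (H2 : ∀ A ⊆ E, A.ncard = rmin → convexHull ℝ A ∈ ℛ₀)
    (Ω : Set (Euc N)) :
    Ω ∈ dualFam ℛ₀ ↔
      ∃ k < rmin, ∃ d ∈ sph N, ∃ x' : ℕ → Euc N, IsCompatEnum E R d x' ∧
        Ω = convexHull ℝ (E \ x' '' (Set.Iio k)) ∧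
        (1 ≤ k → (∀ j < k, ⟪x' j, d⟫ < ⟪x' k, d⟫) ∧
          (∀ j : ℕ, k ≤ j → j < rmin → ⟪x' j, d⟫ = ⟪x' k, d⟫)) ∧
        (k = 0 → rmin ≤ ((face C d) ∩ E).ncard) := by
  classical
  have hEfin : E.Finite := by
    rw [hE]; exact Set.Finite.biUnion hfin (fun Ω' hΩ' => (hpoly Ω' hΩ').2.2.2)
  have hlb : ∀ Ω' ∈ ℛ₀, rmin ≤ (Ω' ∩ E).ncard := fun Ω' hΩ' => hrmin.2 ⟨Ω', hΩ', rfl⟩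
  have hrR : rmin ≤ R := le_of_lt hrminR
  have hkeyA : ∀ d : Euc N, dualPoly ℛ₀ d = convexHull ℝ (DFC.Gset E rmin d) := fun d => by
    unfold dualPoly
    rw [DFC.biUnion_activeExt ℛ₀ E hE hEfin rmin (by omega) hlb H1 H2 d]
  constructor
  · rintro ⟨d, hd, rfl⟩
    obtain ⟨x', he⟩ := DFC.exists_compatEnum E hEfin R hR d
    obtain ⟨hinj, himg, hmono⟩ := he
    have hmemE : ∀ i < R, x' i ∈ E := fun i hi =>
      himg ▸ Set.mem_image_of_mem x' (Set.mem_Iio.mpr hi)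
    have hex : ∃ i, ⟪x' (rmin - 1), d⟫ ≤ ⟪x' i, d⟫ := ⟨rmin - 1, le_refl _⟩
    set k := Nat.find hex with hkdef
    have hkspec : ⟪x' (rmin - 1), d⟫ ≤ ⟪x' k, d⟫ := Nat.find_spec hex
    have hkle : k ≤ rmin - 1 := Nat.find_min' hex (le_refl _)
    have hiff : ∀ i < R, (⟪x' i, d⟫ < ⟪x' (rmin - 1), d⟫ ↔ i < k) := by
      intro i hi
      constructor
      · intro hlt
        by_contra hik
        exact absurd (le_trans hkspec (hmono k i (not_lt.mp hik) hi)) (not_le.mpr hlt)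
      · intro hik
        exact not_le.mp (Nat.find_min hex hik)
    refine ⟨k, by omega, d, hd, x', ⟨hinj, himg, hmono⟩, ?_, ?_, ?_⟩
    · rw [hkeyA d, DFC.gset_eq E hEfin hR (by omega) hrR hkle ⟨hinj, himg, hmono⟩ hiff]
    · intro hk1
      constructor
      · intro j hj
        exact lt_of_lt_of_le ((hiff j (by omega)).mpr hj) hkspec
      · intro j hkj hjr
        refine le_antisymm ?_ (hmono k j hkj (by omega))
        exact le_trans (hmono j (rmin - 1) (by omega) (by omega)) hkspec
    · intro hk0
      rw [hk0] at hkspec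
      have hmin : ∀ y ∈ E, ⟪x' 0, d⟫ ≤ ⟪y, d⟫ := by
        intro y hy
        rw [← himg] at hy
        obtain ⟨m, hm, rfl⟩ := hy
        exact hmono 0 m (Nat.zero_le m) (Set.mem_Iio.mp hm)
      have hsub : x' '' (Set.Iio rmin) ⊆ face C d ∩ E := by
        rintro y ⟨j, hj, rfl⟩
        rw [Set.mem_Iio] at hj
        have hjE : x' j ∈ E := hmemE j (by omega)
        refine ⟨⟨hC ▸ subset_convexHull ℝ E hjE, ?_⟩, hjE⟩
        intro z hz
        have h1 : ⟪x' j, d⟫ ≤ ⟪x' 0, d⟫ :=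
          le_trans (hmono j (rmin - 1) (by omega) (by omega)) hkspec
        refine le_trans h1 ?_
        rw [hC] at hz
        exact DFC.hull_ge_half hmin hz
      calc rmin = (Set.Iio rmin).ncard := (DFC.ncard_Iio _).symm
        _ = (x' '' (Set.Iio rmin)).ncard :=
            (Set.ncard_image_of_injOn (hinj.mono (fun m hm => Set.mem_Iio.mpr
              (lt_of_lt_of_le (Set.mem_Iio.mp hm) hrR)))).symm
        _ ≤ _ := Set.ncard_le_ncard hsub (hEfin.subset (fun y hy => hy.2))
  · rintro ⟨k, hk, d, hd, x', he, hΩ, hcond, hcond0⟩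
    refine ⟨d, hd, ?_⟩
    rw [hkeyA d, hΩ]
    congr 1
    by_cases hk0 : k = 0
    · subst hk0
      have him0 : x' '' (Set.Iio 0) = (∅ : Set (Euc N)) := by
        have : (Set.Iio 0 : Set ℕ) = ∅ := by ext n; simp
        rw [this, Set.image_empty]
      rw [him0, Set.diff_empty]
      apply Set.Subset.antisymm (fun z hz => hz.1)
      intro z hzE
      refine ⟨hzE, le_trans (hcond0 rfl) (Set.ncard_le_ncard ?_
        (hEfin.subset (fun y hy => hy.1)))⟩
      rintro y ⟨⟨hyC, hymin⟩, hyE⟩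
      exact ⟨hyE, hymin z (hC ▸ subset_convexHull ℝ E hzE)⟩
    · have hk1 : 1 ≤ k := by omega
      obtain ⟨hstrict, heqc⟩ := hcond hk1
      obtain ⟨hinj, himg, hmono⟩ := he
      have hrk : ⟪x' (rmin - 1), d⟫ = ⟪x' k, d⟫ := heqc (rmin - 1) (by omega) (by omega)
      have hiff : ∀ i < R, (⟪x' i, d⟫ < ⟪x' (rmin - 1), d⟫ ↔ i < k) := by
        intro i hi
        rw [hrk]
        constructor
        · intro hlt
          by_contra hik
          exact absurd (hmono k i (not_lt.mp hik) hi) (not_le.mpr hlt)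
        · exact hstrict i
      exact DFC.gset_eq E hEfin hR (by omega) hrR (by omega) ⟨hinj, himg, hmono⟩ hiff
end
end
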